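/- arXiv:1110.5543 — 2 statements merged into one kernel-verified Lean document; each statement's English description precedes it below -/
import Mathlib

section
/- Let ⟨A,B⟩ be a pairing of regular multiplier Hopf algebras A and B over a field K. The map R: B⊗A → A⊗B defined by R(b⊗a) = b_(1)▶a ⊗ b_(2) is bijective with inverse R^{-1}(a⊗b) = b_(2) ⊗ S^{-1}(b_(1))▶a; consequently the Heisenberg double product (a#b)(a'#b') = a(b_(1)▶a') # b_(2)b' on A⊗B is a non-degenerate associative product. -/
open TensorProduct LinearMap
open scoped TensorProduct

/-! ## A framework for (an algebraic model of) regular multiplier Hopf algebras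

A regular multiplier Hopf algebra `(A, Δ)` is a non-degenerate (possibly non-unital)
algebra `A` together with a coassociative comultiplication (here modelled as a map
`A →ₗ[K] A ⊗[K] A`), such that the canonical maps `T₁ : a ⊗ b ↦ Δ(a)(1 ⊗ b)` and
`T₂ : a ⊗ b ↦ (a ⊗ 1)Δ(b)` are bijective; regularity is encoded by the bijectivity of
the antipode.  The counit and antipode axioms are stated in their "covered"
(multiplied) form, as appropriate for non-unital algebras. -/
structure RegularMultiplierHopf (K : Type) [Field K]
    (A : Type) [NonUnitalRing A] [Module K A] [SMulCommClass K A A] [IsScalarTower K A A] :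
    Type where
  comul : A →ₗ[K] A ⊗[K] A
  counit : A →ₗ[K] K
  antipode : A ≃ₗ[K] A
  mul_nondeg_left : ∀ a : A, (∀ x : A, a * x = 0) → a = 0
  mul_nondeg_right : ∀ a : A, (∀ x : A, x * a = 0) → a = 0
  comul_mul : ∀ a b : A, comul (a * b) = comul a * comul b
  coassoc : ∀ a : A,
    (TensorProduct.assoc K A A A) ((LinearMap.rTensor A comul) (comul a))
      = (LinearMap.lTensor A comul) (comul a)
  counit_left : ∀ a : A, (TensorProduct.lid K A) ((LinearMap.rTensor A counit) (comul a)) = a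
  counit_right : ∀ a : A, (TensorProduct.rid K A) ((LinearMap.lTensor A counit) (comul a)) = a
  counit_mul : ∀ a b : A, counit (a * b) = counit a * counit b
  antipode_mul_left : ∀ a x : A,
    (LinearMap.mul' K A) ((LinearMap.rTensor A antipode.toLinearMap) (comul a)) * x
      = counit a • x
  antipode_mul_right : ∀ a x : A,
    x * (LinearMap.mul' K A) ((LinearMap.lTensor A antipode.toLinearMap) (comul a))
      = counit a • x
  T1_bijective : Function.Bijective fun z : A ⊗[K] A =>
    (LinearMap.lTensor A (LinearMap.mul' K A))
      ((TensorProduct.assoc K A A A) ((LinearMap.rTensor A comul) z))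
  T2_bijective : Function.Bijective fun z : A ⊗[K] A =>
    (LinearMap.rTensor A (LinearMap.mul' K A))
      ((TensorProduct.assoc K A A A).symm ((LinearMap.lTensor A comul) z))

namespace RegularMultiplierHopf

variable {K : Type} [Field K]
variable {A : Type} [NonUnitalRing A] [Module K A] [SMulCommClass K A A] [IsScalarTower K A A]

/-- The iterated comultiplication `a ↦ a₍₁₎ ⊗ (a₍₂₎ ⊗ a₍₃₎)`. -/
noncomputable def comul2 (h : RegularMultiplierHopf K A) : A →ₗ[K] A ⊗[K] (A ⊗[K] A) :=
  (LinearMap.lTensor A h.comul) ∘ₗ h.comul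

end RegularMultiplierHopf

/-- A pairing `⟨A, B⟩` of regular multiplier Hopf algebras: a non-degenerate bilinear
form for which the product of each algebra is dual to the comultiplication of the
other one, compatible with the antipodes.  The duality conditions are expressed via
arbitrary finite Sweedler expansions of the comultiplications. -/
structure MHAPairing (K : Type) [Field K]
    (A : Type) [NonUnitalRing A] [Module K A] [SMulCommClass K A A] [IsScalarTower K A A]
    (B : Type) [NonUnitalRing B] [Module K B] [SMulCommClass K B B] [IsScalarTower K B B]
    (hA : RegularMultiplierHopf K A) (hB : RegularMultiplierHopf K B) : Type where
  pair : A →ₗ[K] B →ₗ[K] K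
  nondeg_left : ∀ a : A, (∀ b : B, pair a b = 0) → a = 0
  nondeg_right : ∀ b : B, (∀ a : A, pair a b = 0) → b = 0
  pair_mul_comul : ∀ (a a' : A) (b : B) (s : Finset ℕ) (b1 b2 : ℕ → B),
    hB.comul b = ∑ i ∈ s, b1 i ⊗ₜ[K] b2 i →
    pair (a * a') b = ∑ i ∈ s, pair a (b1 i) * pair a' (b2 i)
  pair_comul_mul : ∀ (a : A) (b b' : B) (s : Finset ℕ) (a1 a2 : ℕ → A),
    hA.comul a = ∑ i ∈ s, a1 i ⊗ₜ[K] a2 i →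
    pair a (b * b') = ∑ i ∈ s, pair (a1 i) b * pair (a2 i) b'
  pair_antipode : ∀ (a : A) (b : B), pair (hA.antipode a) b = pair a (hB.antipode b)

namespace MHAPairing

variable {K : Type} [Field K]
variable {A : Type} [NonUnitalRing A] [Module K A] [SMulCommClass K A A] [IsScalarTower K A A]
variable {B : Type} [NonUnitalRing B] [Module K B] [SMulCommClass K B B] [IsScalarTower K B B]
variable {hA : RegularMultiplierHopf K A} {hB : RegularMultiplierHopf K B}

/-- `b ▶ a = ⟨a₍₂₎, b⟩ a₍₁₎`, the left regular action of `B` on `A`. -/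
noncomputable def lact (P : MHAPairing K A B hA hB) (b : B) (a : A) : A :=
  (TensorProduct.rid K A) ((LinearMap.lTensor A (P.pair.flip b)) (hA.comul a))

/-- `a ◀ b = ⟨a₍₁₎, b⟩ a₍₂₎`, the right regular action of `B` on `A`. -/
noncomputable def ract (P : MHAPairing K A B hA hB) (a : A) (b : B) : A :=
  (TensorProduct.lid K A) ((LinearMap.rTensor A (P.pair.flip b)) (hA.comul a))

/-- `a ▶ b = ⟨a, b₍₂₎⟩ b₍₁₎`, the left regular action of `A` on `B`. -/
noncomputable def lactB (P : MHAPairing K A B hA hB) (a : A) (b : B) : B :=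
  (TensorProduct.rid K B) ((LinearMap.lTensor B (P.pair a)) (hB.comul b))

/-- `b ◀ a = ⟨a, b₍₁₎⟩ b₍₂₎`, the right regular action of `A` on `B`. -/
noncomputable def ractB (P : MHAPairing K A B hA hB) (b : B) (a : A) : B :=
  (TensorProduct.lid K B) ((LinearMap.rTensor B (P.pair a)) (hB.comul b))

end MHAPairing

namespace HDouble

variable {K : Type} [Field K]

section Repr
variable {M N : Type} [AddCommGroup M] [Module K M] [AddCommGroup N] [Module K N]

theorem exists_repr (t : M ⊗[K] N) :
    ∃ (s : Finset ℕ) (x : ℕ → M) (y : ℕ → N), t = ∑ i ∈ s, x i ⊗ₜ[K] y i := by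
  induction t using TensorProduct.induction_on with
  | zero => exact ⟨∅, 0, 0, by simp⟩
  | tmul m n => exact ⟨{0}, fun _ => m, fun _ => n, by simp⟩
  | add u v hu hv =>
    obtain ⟨s, x, y, rfl⟩ := hu
    obtain ⟨s', x', y', rfl⟩ := hv
    refine ⟨s.image (fun n => 2*n) ∪ s'.image (fun n => 2*n+1),
      fun n => if n % 2 = 0 then x (n/2) else x' (n/2),
      fun n => if n % 2 = 0 then y (n/2) else y' (n/2), ?_⟩
    rw [Finset.sum_union, Finset.sum_image (by intro a _ b _ (h : 2*a = 2*b); omega), Finset.sum_image (by intro a _ b _ (h : 2*a+1 = 2*b+1); omega)]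
    · congr 1
      · exact Finset.sum_congr rfl fun i _ => by
          have h2 : (2*i) / 2 = i := by omega
          simp [h2]
      · exact Finset.sum_congr rfl fun i _ => by
          have h1 : ¬((2*i+1) % 2 = 0) := by omega
          have h2 : (2*i+1) / 2 = i := by omega
          simp [h1, h2]
    · rw [Finset.disjoint_left]
      intro n hn hn'
      simp only [Finset.mem_image] at hn hn'
      omega

end Repr

section Sep

variable {U V W : Type} [AddCommGroup U] [Module K U] [AddCommGroup V] [Module K V]
  [AddCommGroup W] [Module K W]

theorem sep_left {ι : Type} (F : ι → (U →ₗ[K] K))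
    (hF : ∀ u : U, (∀ i, F i u = 0) → u = 0)
    (t : U ⊗[K] V) (ht : ∀ i, (TensorProduct.lid K V) ((LinearMap.rTensor V (F i)) t) = 0) :
    t = 0 := by
  classical
  let bV := Module.Basis.ofVectorSpace K V
  set e : U ⊗[K] V ≃ₗ[K] U ⊗[K] (Module.Basis.ofVectorSpaceIndex K V →₀ K) :=
    TensorProduct.congr (LinearEquiv.refl K U) bV.repr with he
  have key : ∀ (t : U ⊗[K] V) (i : ι) (k : Module.Basis.ofVectorSpaceIndex K V),
      F i ((TensorProduct.finsuppScalarRight K K U _ (e t)) k)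
        = bV.repr ((TensorProduct.lid K V) ((LinearMap.rTensor V (F i)) t)) k := by
    intro t i k
    induction t using TensorProduct.induction_on with
    | zero => simp
    | tmul u v =>
      simp [he, TensorProduct.congr_tmul, TensorProduct.finsuppScalarRight_apply_tmul_apply,
        map_smul, mul_comm]
    | add u v hu hv => simp [map_add, hu, hv, Finsupp.add_apply]
  have hz : ∀ k, (TensorProduct.finsuppScalarRight K K U _ (e t)) k = 0 := by
    intro k
    apply hF
    intro i
    rw [key t i k, ht i]
    simp
  have : (TensorProduct.finsuppScalarRight K K U _ (e t)) = 0 := Finsupp.ext fun k => hz k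
  have : e t = 0 := by
    have := (TensorProduct.finsuppScalarRight K K U (Module.Basis.ofVectorSpaceIndex K V)).map_eq_zero_iff.mp this
    exact this
  exact (LinearEquiv.map_eq_zero_iff e).mp this

theorem sep_right {ι : Type} (G : ι → (V →ₗ[K] K))
    (hG : ∀ v : V, (∀ i, G i v = 0) → v = 0)
    (t : U ⊗[K] V) (ht : ∀ i, (TensorProduct.rid K U) ((LinearMap.lTensor U (G i)) t) = 0) :
    t = 0 := by
  have h := sep_left (V := U) G hG ((TensorProduct.comm K U V) t) ?_
  · exact (LinearEquiv.map_eq_zero_iff _).mp h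
  · intro i
    rw [← ht i]
    clear ht
    induction t using TensorProduct.induction_on with
    | zero => simp
    | tmul u v => simp [mul_comm, TensorProduct.smul_tmul', TensorProduct.smul_tmul]
    | add u v hu hv => simp [map_add, hu, hv]

theorem sep_left_mod {ι : Type} (F : ι → (U →ₗ[K] W))
    (hF : ∀ u : U, (∀ i, F i u = 0) → u = 0)
    (t : U ⊗[K] V) (ht : ∀ i, (LinearMap.rTensor V (F i)) t = 0) :
    t = 0 := by
  refine sep_left (ι := ι × (W →ₗ[K] K)) (fun p => (p.2).comp (F p.1)) ?_ t ?_
  · intro u hu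
    apply hF
    intro i
    rw [← Module.forall_dual_apply_eq_zero_iff K]
    intro f
    exact hu (i, f)
  · intro p
    rw [LinearMap.rTensor_comp, LinearMap.comp_apply, ht p.1, map_zero, map_zero]

end Sep
section SepMod
variable {U V W : Type} [AddCommGroup U] [Module K U] [AddCommGroup V] [Module K V]
  [AddCommGroup W] [Module K W]

theorem sep_right_mod {ι : Type} (G : ι → (V →ₗ[K] W))
    (hG : ∀ v : V, (∀ i, G i v = 0) → v = 0)
    (t : U ⊗[K] V) (ht : ∀ i, (LinearMap.lTensor U (G i)) t = 0) :
    t = 0 := by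
  refine sep_right (ι := ι × (W →ₗ[K] K)) (fun p => (p.2).comp (G p.1)) ?_ t ?_
  · intro v hv
    apply hG
    intro i
    rw [← Module.forall_dual_apply_eq_zero_iff K]
    intro f
    exact hv (i, f)
  · intro p
    rw [LinearMap.lTensor_comp, LinearMap.comp_apply, ht p.1, map_zero, map_zero]

end SepMod

section Hopf

variable {A : Type} [NonUnitalRing A] [Module K A] [SMulCommClass K A A] [IsScalarTower K A A]

/-- chosen finite Sweedler expansion of the comultiplication -/
noncomputable def eS (h : RegularMultiplierHopf K A) (a : A) : Finset ℕ :=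
  (exists_repr (h.comul a)).choose

noncomputable def e1 (h : RegularMultiplierHopf K A) (a : A) : ℕ → A :=
  (exists_repr (h.comul a)).choose_spec.choose

noncomputable def e2 (h : RegularMultiplierHopf K A) (a : A) : ℕ → A :=
  (exists_repr (h.comul a)).choose_spec.choose_spec.choose

theorem comul_eq (h : RegularMultiplierHopf K A) (a : A) :
    h.comul a = ∑ i ∈ eS h a, e1 h a i ⊗ₜ[K] e2 h a i :=
  (exists_repr (h.comul a)).choose_spec.choose_spec.choose_spec

variable (h : RegularMultiplierHopf K A)

theorem counit_left_elem {ι : Type} (s : Finset ι) (c1 c2 : ι → A) (a : A)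
    (hc : h.comul a = ∑ i ∈ s, c1 i ⊗ₜ[K] c2 i) :
    ∑ i ∈ s, h.counit (c1 i) • c2 i = a := by
  have hcl := h.counit_left a
  rw [hc] at hcl
  simpa [map_sum] using hcl

theorem counit_right_elem {ι : Type} (s : Finset ι) (c1 c2 : ι → A) (a : A)
    (hc : h.comul a = ∑ i ∈ s, c1 i ⊗ₜ[K] c2 i) :
    ∑ i ∈ s, h.counit (c2 i) • c1 i = a := by
  have hcl := h.counit_right a
  rw [hc] at hcl
  simpa [map_sum] using hcl

theorem antipode_left_elem {ι : Type} (s : Finset ι) (c1 c2 : ι → A) (a : A)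
    (hc : h.comul a = ∑ i ∈ s, c1 i ⊗ₜ[K] c2 i) (x : A) :
    (∑ i ∈ s, h.antipode (c1 i) * c2 i) * x = h.counit a • x := by
  have hal := h.antipode_mul_left a x
  rw [hc] at hal
  simpa [map_sum] using hal

theorem antipode_right_elem {ι : Type} (s : Finset ι) (c1 c2 : ι → A) (a : A)
    (hc : h.comul a = ∑ i ∈ s, c1 i ⊗ₜ[K] c2 i) (x : A) :
    x * (∑ i ∈ s, c1 i * h.antipode (c2 i)) = h.counit a • x := by
  have hal := h.antipode_mul_right a x
  rw [hc] at hal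
  simpa [map_sum] using hal

theorem coassoc_sum {X : Type} [AddCommGroup X] [Module K X]
    (Φ : A ⊗[K] (A ⊗[K] A) →ₗ[K] X) (a : A) :
    ∑ i ∈ eS h a, ∑ k ∈ eS h (e1 h a i),
      Φ (e1 h (e1 h a i) k ⊗ₜ[K] (e2 h (e1 h a i) k ⊗ₜ[K] e2 h a i))
    = ∑ i ∈ eS h a, ∑ k ∈ eS h (e2 h a i),
      Φ (e1 h a i ⊗ₜ[K] (e1 h (e2 h a i) k ⊗ₜ[K] e2 h (e2 h a i) k)) := by
  have LHSeq : (TensorProduct.assoc K A A A) ((LinearMap.rTensor A h.comul) (h.comul a))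
      = ∑ i ∈ eS h a, ∑ k ∈ eS h (e1 h a i),
        e1 h (e1 h a i) k ⊗ₜ[K] (e2 h (e1 h a i) k ⊗ₜ[K] e2 h a i) := by
    rw [comul_eq h a, map_sum, map_sum]
    refine Finset.sum_congr rfl fun i _ => ?_
    rw [LinearMap.rTensor_tmul, comul_eq h (e1 h a i), TensorProduct.sum_tmul, map_sum]
    exact Finset.sum_congr rfl fun k _ => by rw [TensorProduct.assoc_tmul]
  have RHSeq : (LinearMap.lTensor A h.comul) (h.comul a)
      = ∑ i ∈ eS h a, ∑ k ∈ eS h (e2 h a i),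
        e1 h a i ⊗ₜ[K] (e1 h (e2 h a i) k ⊗ₜ[K] e2 h (e2 h a i) k) := by
    rw [comul_eq h a, map_sum]
    refine Finset.sum_congr rfl fun i _ => ?_
    rw [LinearMap.lTensor_tmul, comul_eq h (e2 h a i), TensorProduct.tmul_sum]
  have key : (∑ i ∈ eS h a, ∑ k ∈ eS h (e1 h a i),
        e1 h (e1 h a i) k ⊗ₜ[K] (e2 h (e1 h a i) k ⊗ₜ[K] e2 h a i))
      = ∑ i ∈ eS h a, ∑ k ∈ eS h (e2 h a i),
        e1 h a i ⊗ₜ[K] (e1 h (e2 h a i) k ⊗ₜ[K] e2 h (e2 h a i) k) := by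
    rw [← LHSeq, ← RHSeq, h.coassoc]
  have := congrArg Φ key
  simpa [map_sum] using this

/-- evaluation gadget: `x ⊗ (y ⊗ z) ↦ α x * (β y * γ z)` -/
noncomputable def tri {C : Type} [NonUnitalNonAssocSemiring C] [Module K C]
    [SMulCommClass K C C] [IsScalarTower K C C] (α β γ : A →ₗ[K] C) :
    A ⊗[K] (A ⊗[K] A) →ₗ[K] C :=
  (LinearMap.mul' K C) ∘ₗ
    (TensorProduct.map α ((LinearMap.mul' K C) ∘ₗ TensorProduct.map β γ))

@[simp] theorem tri_tmul {C : Type} [NonUnitalNonAssocSemiring C] [Module K C]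
    [SMulCommClass K C C] [IsScalarTower K C C] (α β γ : A →ₗ[K] C) (x y z : A) :
    tri α β γ (x ⊗ₜ[K] (y ⊗ₜ[K] z)) = α x * (β y * γ z) := by
  simp [tri]

theorem antipode_antimul (a b : A) :
    h.antipode (a * b) = h.antipode b * h.antipode a := by
  set S := h.antipode with hS
  have hSb : ∑ j ∈ eS h b, h.counit (e1 h b j) • S (e2 h b j) = S b := by
    conv_rhs => rw [← counit_left_elem h (eS h b) (e1 h b) (e2 h b) b (comul_eq h b)]
    rw [map_sum]
    simp [map_smul]
  have hSab : ∀ W : A, ∑ i ∈ eS h a, h.counit (e2 h a i) • (S (e1 h a i * W))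
      = S (a * W) := by
    intro W
    have : ∑ i ∈ eS h a, h.counit (e2 h a i) • (S (e1 h a i * W))
        = S ((∑ i ∈ eS h a, h.counit (e2 h a i) • e1 h a i) * W) := by
      rw [Finset.sum_mul, map_sum]
      exact Finset.sum_congr rfl fun i _ => by rw [smul_mul_assoc, map_smul]
    rw [this, counit_right_elem h (eS h a) (e1 h a) (e2 h a) a (comul_eq h a)]
  -- the pivot element
  set X : A := ∑ i ∈ eS h a, ∑ j ∈ eS h b,
    (LinearMap.mul' K A) ((LinearMap.rTensor A S.toLinearMap) (h.comul (e1 h a i * e1 h b j)))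
      * (S (e2 h b j) * S (e2 h a i)) with hX
  have step1 : X = S b * S a := by
    rw [hX]
    calc ∑ i ∈ eS h a, ∑ j ∈ eS h b,
          (LinearMap.mul' K A) ((LinearMap.rTensor A S.toLinearMap)
            (h.comul (e1 h a i * e1 h b j))) * (S (e2 h b j) * S (e2 h a i))
        = ∑ i ∈ eS h a, ∑ j ∈ eS h b,
            (h.counit (e1 h a i) * h.counit (e1 h b j)) • (S (e2 h b j) * S (e2 h a i)) := by
          refine Finset.sum_congr rfl fun i _ => Finset.sum_congr rfl fun j _ => ?_
          rw [h.antipode_mul_left, h.counit_mul]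
      _ = ∑ i ∈ eS h a, h.counit (e1 h a i) •
            ((∑ j ∈ eS h b, h.counit (e1 h b j) • S (e2 h b j)) * S (e2 h a i)) := by
          refine Finset.sum_congr rfl fun i _ => ?_
          rw [Finset.sum_mul, Finset.smul_sum]
          exact Finset.sum_congr rfl fun j _ => by rw [mul_smul, smul_mul_assoc]
      _ = ∑ i ∈ eS h a, h.counit (e1 h a i) • (S b * S (e2 h a i)) := by
          rw [hSb]
      _ = S b * ∑ i ∈ eS h a, h.counit (e1 h a i) • S (e2 h a i) := by
          rw [Finset.mul_sum]
          exact Finset.sum_congr rfl fun i _ => (mul_smul_comm _ _ _).symm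
      _ = S b * S a := by
          congr 1
          conv_rhs => rw [← counit_left_elem h (eS h a) (e1 h a) (e2 h a) a (comul_eq h a)]
          rw [map_sum]
          simp [map_smul]
  have step2 : X = S (a * b) := by
    rw [hX]
    calc ∑ i ∈ eS h a, ∑ j ∈ eS h b,
          (LinearMap.mul' K A) ((LinearMap.rTensor A S.toLinearMap)
            (h.comul (e1 h a i * e1 h b j))) * (S (e2 h b j) * S (e2 h a i))
        = ∑ i ∈ eS h a, ∑ k ∈ eS h (e1 h a i), ∑ j ∈ eS h b, ∑ l ∈ eS h (e1 h b j),
            S (e1 h (e1 h a i) k * e1 h (e1 h b j) l) *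
              ((e2 h (e1 h a i) k * e2 h (e1 h b j) l) * (S (e2 h b j) * S (e2 h a i))) := by
          refine Finset.sum_congr rfl fun i _ => ?_
          rw [← Finset.sum_comm]
          refine Finset.sum_congr rfl fun j _ => ?_
          rw [h.comul_mul, comul_eq h (e1 h a i), comul_eq h (e1 h b j), Finset.sum_mul_sum]
          simp only [Algebra.TensorProduct.tmul_mul_tmul, map_sum, LinearMap.rTensor_tmul,
            LinearMap.mul'_apply, Finset.sum_mul, LinearEquiv.coe_coe]
          exact Finset.sum_congr rfl fun k _ => Finset.sum_congr rfl fun l _ => by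
            rw [mul_assoc]
      _ = ∑ i ∈ eS h a, ∑ k ∈ eS h (e1 h a i), ∑ j ∈ eS h b, ∑ l ∈ eS h (e2 h b j),
            S (e1 h (e1 h a i) k * e1 h b j) *
              ((e2 h (e1 h a i) k * e1 h (e2 h b j) l) *
                (S (e2 h (e2 h b j) l) * S (e2 h a i))) := by
          refine Finset.sum_congr rfl fun i _ => Finset.sum_congr rfl fun k _ => ?_
          have := coassoc_sum h
            (tri (S.toLinearMap ∘ₗ LinearMap.mulLeft K (e1 h (e1 h a i) k))
              (LinearMap.mulLeft K (e2 h (e1 h a i) k))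
              (LinearMap.mulRight K (S (e2 h a i)) ∘ₗ S.toLinearMap)) b
          simpa only [tri_tmul, LinearMap.comp_apply, LinearMap.mulLeft_apply,
            LinearMap.mulRight_apply, LinearEquiv.coe_coe] using this
      _ = ∑ i ∈ eS h a, ∑ k ∈ eS h (e1 h a i),
            S (e1 h (e1 h a i) k * b) * (e2 h (e1 h a i) k * S (e2 h a i)) := by
          refine Finset.sum_congr rfl fun i _ => Finset.sum_congr rfl fun k _ => ?_
          have inner : ∀ j ∈ eS h b, ∑ l ∈ eS h (e2 h b j),
              S (e1 h (e1 h a i) k * e1 h b j) *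
                ((e2 h (e1 h a i) k * e1 h (e2 h b j) l) *
                  (S (e2 h (e2 h b j) l) * S (e2 h a i)))
              = h.counit (e2 h b j) •
                  (S (e1 h (e1 h a i) k * e1 h b j) * (e2 h (e1 h a i) k * S (e2 h a i))) := by
            intro j _
            rw [← Finset.mul_sum]
            congr 1
            have rebr : ∀ l ∈ eS h (e2 h b j),
                (e2 h (e1 h a i) k * e1 h (e2 h b j) l) *
                  (S (e2 h (e2 h b j) l) * S (e2 h a i))
                = (e2 h (e1 h a i) k * (e1 h (e2 h b j) l * S (e2 h (e2 h b j) l))) *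
                    S (e2 h a i) := by
              intro l _
              rw [← mul_assoc, mul_assoc (e2 h (e1 h a i) k)]
            rw [Finset.sum_congr rfl rebr, ← Finset.sum_mul, ← Finset.mul_sum,
              antipode_right_elem h (eS h (e2 h b j)) (e1 h (e2 h b j)) (e2 h (e2 h b j))
                (e2 h b j) (comul_eq h (e2 h b j)) (e2 h (e1 h a i) k),
              smul_mul_assoc, mul_smul_comm]
          rw [Finset.sum_congr rfl inner]
          calc ∑ j ∈ eS h b, h.counit (e2 h b j) •
                (S (e1 h (e1 h a i) k * e1 h b j) * (e2 h (e1 h a i) k * S (e2 h a i)))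
              = (∑ j ∈ eS h b, h.counit (e2 h b j) • S (e1 h (e1 h a i) k * e1 h b j)) *
                  (e2 h (e1 h a i) k * S (e2 h a i)) := by
                rw [Finset.sum_mul]
                exact Finset.sum_congr rfl fun j _ => by rw [smul_mul_assoc]
            _ = S (e1 h (e1 h a i) k * b) * (e2 h (e1 h a i) k * S (e2 h a i)) := by
                congr 1
                have : ∑ j ∈ eS h b, h.counit (e2 h b j) • S (e1 h (e1 h a i) k * e1 h b j)
                    = S (e1 h (e1 h a i) k * ∑ j ∈ eS h b, h.counit (e2 h b j) • e1 h b j) := by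
                  rw [Finset.mul_sum, map_sum]
                  exact Finset.sum_congr rfl fun j _ => by rw [mul_smul_comm, map_smul]
                rw [this, counit_right_elem h (eS h b) (e1 h b) (e2 h b) b (comul_eq h b)]
      _ = ∑ i ∈ eS h a, ∑ l ∈ eS h (e2 h a i),
            S (e1 h a i * b) * (e1 h (e2 h a i) l * S (e2 h (e2 h a i) l)) := by
          have := coassoc_sum h
            (tri (S.toLinearMap ∘ₗ LinearMap.mulRight K b) (LinearMap.id)
              S.toLinearMap) a
          simpa only [tri_tmul, LinearMap.comp_apply, LinearMap.mulRight_apply,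
            LinearMap.id_coe, id_eq, LinearEquiv.coe_coe] using this
      _ = ∑ i ∈ eS h a, h.counit (e2 h a i) • S (e1 h a i * b) := by
          refine Finset.sum_congr rfl fun i _ => ?_
          rw [← Finset.mul_sum,
            antipode_right_elem h (eS h (e2 h a i)) (e1 h (e2 h a i)) (e2 h (e2 h a i))
              (e2 h a i) (comul_eq h (e2 h a i)) (S (e1 h a i * b))]
      _ = S (a * b) := hSab b
  rw [← step1, step2]

theorem sinv_antimul (x y : A) :
    h.antipode.symm (x * y) = h.antipode.symm y * h.antipode.symm x := by
  apply h.antipode.injective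
  rw [LinearEquiv.apply_symm_apply, antipode_antimul h, LinearEquiv.apply_symm_apply,
    LinearEquiv.apply_symm_apply]

theorem sinv_left_cover {ι : Type} (s : Finset ι) (c1 c2 : ι → A) (c : A)
    (hc : h.comul c = ∑ i ∈ s, c1 i ⊗ₜ[K] c2 i) (z : A) :
    z * (∑ i ∈ s, h.antipode.symm (c2 i) * c1 i) = h.counit c • z := by
  have base := antipode_left_elem h s c1 c2 c hc (h.antipode z)
  have hE : h.antipode.symm (∑ i ∈ s, h.antipode (c1 i) * c2 i)
      = ∑ i ∈ s, h.antipode.symm (c2 i) * c1 i := by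
    rw [map_sum]
    refine Finset.sum_congr rfl fun i _ => ?_
    rw [sinv_antimul h, LinearEquiv.symm_apply_apply]
  calc z * (∑ i ∈ s, h.antipode.symm (c2 i) * c1 i)
      = h.antipode.symm ((∑ i ∈ s, h.antipode (c1 i) * c2 i) * h.antipode z) := by
        rw [sinv_antimul h, LinearEquiv.symm_apply_apply, hE]
    _ = h.counit c • z := by rw [base, map_smul, LinearEquiv.symm_apply_apply]

theorem sinv_right_cover {ι : Type} (s : Finset ι) (c1 c2 : ι → A) (c : A)
    (hc : h.comul c = ∑ i ∈ s, c1 i ⊗ₜ[K] c2 i) (z : A) :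
    z * (∑ i ∈ s, c2 i * h.antipode.symm (c1 i)) = h.counit c • z := by
  have hE : h.antipode.symm (∑ i ∈ s, c1 i * h.antipode (c2 i))
      = ∑ i ∈ s, c2 i * h.antipode.symm (c1 i) := by
    rw [map_sum]
    refine Finset.sum_congr rfl fun i _ => ?_
    rw [sinv_antimul h, LinearEquiv.symm_apply_apply]
  have base0 : ∀ w : A, (∑ i ∈ s, c2 i * h.antipode.symm (c1 i)) * w = h.counit c • w := by
    intro w
    have base := antipode_right_elem h s c1 c2 c hc (h.antipode w)
    calc (∑ i ∈ s, c2 i * h.antipode.symm (c1 i)) * w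
        = h.antipode.symm (h.antipode w * (∑ i ∈ s, c1 i * h.antipode (c2 i))) := by
          rw [sinv_antimul h, LinearEquiv.symm_apply_apply, hE]
      _ = h.counit c • w := by rw [base, map_smul, LinearEquiv.symm_apply_apply]
  have key : ∀ w : A,
      (z * (∑ i ∈ s, c2 i * h.antipode.symm (c1 i)) - h.counit c • z) * w = 0 := by
    intro w
    rw [sub_mul, mul_assoc, base0 w, smul_mul_assoc, mul_smul_comm, sub_self]
  exact sub_eq_zero.mp (h.mul_nondeg_left _ key)

end Hopf


section Pairing

variable {A : Type} [NonUnitalRing A] [Module K A] [SMulCommClass K A A] [IsScalarTower K A A]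
variable {B : Type} [NonUnitalRing B] [Module K B] [SMulCommClass K B B] [IsScalarTower K B B]
variable {hA : RegularMultiplierHopf K A} {hB : RegularMultiplierHopf K B}
variable (P : MHAPairing K A B hA hB)

/-- the pairing of `A ⊗ A` with `B ⊗ B` -/
noncomputable def dpair : A ⊗[K] A →ₗ[K] (B ⊗[K] B →ₗ[K] K) :=
  (LinearMap.llcomp K (B ⊗[K] B) (K ⊗[K] K) K (LinearMap.mul' K K)) ∘ₗ
    (TensorProduct.homTensorHomMap (RingHom.id K) B B K K) ∘ₗ (TensorProduct.map P.pair P.pair)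

@[simp] theorem dpair_tmul (x y : A) (u v : B) :
    dpair P (x ⊗ₜ[K] y) (u ⊗ₜ[K] v) = P.pair x u * P.pair y v := by
  simp [dpair]

theorem pair_mul (a a' : A) (b : B) :
    P.pair (a * a') b = dpair P (a ⊗ₜ[K] a') (hB.comul b) := by
  rw [P.pair_mul_comul a a' b (eS hB b) (e1 hB b) (e2 hB b) (comul_eq hB b),
    comul_eq hB b, map_sum]
  exact Finset.sum_congr rfl fun i _ => (dpair_tmul P a a' _ _).symm

theorem pair_comul (a : A) (b b' : B) :
    P.pair a (b * b') = dpair P (hA.comul a) (b ⊗ₜ[K] b') := by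
  rw [P.pair_comul_mul a b b' (eS hA a) (e1 hA a) (e2 hA a) (comul_eq hA a),
    comul_eq hA a, map_sum, LinearMap.sum_apply]
  exact Finset.sum_congr rfl fun i _ => (dpair_tmul P _ _ b b').symm

theorem lact_eq (y : B) (a : A) :
    P.lact y a = ∑ i ∈ eS hA a, P.pair (e2 hA a i) y • e1 hA a i := by
  rw [MHAPairing.lact, comul_eq hA a, map_sum, map_sum]
  exact Finset.sum_congr rfl fun i _ => by
    rw [LinearMap.lTensor_tmul, TensorProduct.rid_tmul, LinearMap.flip_apply]

theorem ract_eq (p : A) (b : B) :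
    P.ract p b = ∑ l ∈ eS hA p, P.pair (e1 hA p l) b • e2 hA p l := by
  rw [MHAPairing.ract, comul_eq hA p, map_sum, map_sum]
  exact Finset.sum_congr rfl fun l _ => by
    rw [LinearMap.rTensor_tmul, TensorProduct.lid_tmul, LinearMap.flip_apply]

theorem ractB_eq (q : B) (a : A) :
    P.ractB q a = ∑ k ∈ eS hB q, P.pair a (e1 hB q k) • e2 hB q k := by
  rw [MHAPairing.ractB, comul_eq hB q, map_sum, map_sum]
  exact Finset.sum_congr rfl fun k _ => by
    rw [LinearMap.rTensor_tmul, TensorProduct.lid_tmul]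

theorem lactB_eq (a : A) (q : B) :
    P.lactB a q = ∑ k ∈ eS hB q, P.pair a (e2 hB q k) • e1 hB q k := by
  rw [MHAPairing.lactB, comul_eq hB q, map_sum, map_sum]
  exact Finset.sum_congr rfl fun k _ => by
    rw [LinearMap.lTensor_tmul, TensorProduct.rid_tmul]

theorem pair_injA {u v : A} (hp : ∀ c : B, P.pair u c = P.pair v c) : u = v := by
  have : ∀ c : B, P.pair (u - v) c = 0 := by
    intro c
    rw [map_sub, LinearMap.sub_apply, hp c, sub_self]
  exact sub_eq_zero.mp (P.nondeg_left _ this)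

theorem pair_lact (y : B) (a : A) (b : B) :
    P.pair (P.lact y a) b = P.pair a (b * y) := by
  rw [pair_comul, comul_eq hA a, lact_eq]
  simp only [map_sum, map_smul, LinearMap.sum_apply, LinearMap.smul_apply, dpair_tmul,
    smul_eq_mul]
  exact Finset.sum_congr rfl fun i _ => mul_comm _ _

theorem lact_lact (x y : B) (a : A) :
    P.lact x (P.lact y a) = P.lact (x * y) a := by
  apply pair_injA P
  intro c
  rw [pair_lact, pair_lact, pair_lact, mul_assoc]

theorem lact_mul {ι : Type} (s : Finset ι) (b1 b2 : ι → B) (b : B)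
    (hb : hB.comul b = ∑ i ∈ s, b1 i ⊗ₜ[K] b2 i) (w w' : A) :
    P.lact b (w * w') = ∑ i ∈ s, P.lact (b1 i) w * P.lact (b2 i) w' := by
  apply pair_injA P
  intro c
  rw [pair_lact, pair_mul, hB.comul_mul, comul_eq hB c, hb, Finset.sum_mul_sum, map_sum]
  simp only [Algebra.TensorProduct.tmul_mul_tmul, map_sum, dpair_tmul]
  rw [LinearMap.sum_apply, Finset.sum_comm]
  refine Finset.sum_congr rfl fun i _ => ?_
  rw [pair_mul, comul_eq hB c, map_sum]
  refine Finset.sum_congr rfl fun k _ => ?_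
  rw [dpair_tmul, pair_lact, pair_lact]

/-- `b ↦ p ◀ b` as a linear map -/
noncomputable def ractPmap (p : A) : B →ₗ[K] A :=
  (TensorProduct.lid K A).toLinearMap ∘ₗ
    ((LinearMap.applyₗ (hA.comul p) : ((A ⊗[K] A) →ₗ[K] K ⊗[K] A) →ₗ[K] K ⊗[K] A) ∘ₗ
      ((LinearMap.rTensorHom A : (A →ₗ[K] K) →ₗ[K] ((A ⊗[K] A) →ₗ[K] K ⊗[K] A)) ∘ₗ
        P.pair.flip))

@[simp] theorem ractPmap_apply (p : A) (b : B) : ractPmap P p b = P.ract p b := rfl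

/-- `a ↦ q ◀ a` as a linear map -/
noncomputable def ractBmap (q : B) : A →ₗ[K] B :=
  (TensorProduct.lid K B).toLinearMap ∘ₗ
    ((LinearMap.applyₗ (hB.comul q) : ((B ⊗[K] B) →ₗ[K] K ⊗[K] B) →ₗ[K] K ⊗[K] B) ∘ₗ
      ((LinearMap.rTensorHom B : (B →ₗ[K] K) →ₗ[K] ((B ⊗[K] B) →ₗ[K] K ⊗[K] B)) ∘ₗ
        P.pair))

@[simp] theorem ractBmap_apply (q : B) (a : A) : ractBmap P q a = P.ractB q a := rfl

/-- `a ↦ a ▶ q` as a linear map -/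
noncomputable def lactBmap (q : B) : A →ₗ[K] B :=
  (TensorProduct.rid K B).toLinearMap ∘ₗ
    ((LinearMap.applyₗ (hB.comul q) : ((B ⊗[K] B) →ₗ[K] B ⊗[K] K) →ₗ[K] B ⊗[K] K) ∘ₗ
      ((LinearMap.lTensorHom B : (B →ₗ[K] K) →ₗ[K] ((B ⊗[K] B) →ₗ[K] B ⊗[K] K)) ∘ₗ
        P.pair))

@[simp] theorem lactBmap_apply (q : B) (a : A) : lactBmap P q a = P.lactB a q := rfl

/-- `b ↦ b ▶ p` as a linear map -/
noncomputable def lactPmap (p : A) : B →ₗ[K] A :=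
  (TensorProduct.rid K A).toLinearMap ∘ₗ
    ((LinearMap.applyₗ (hA.comul p) : ((A ⊗[K] A) →ₗ[K] A ⊗[K] K) →ₗ[K] A ⊗[K] K) ∘ₗ
      ((LinearMap.lTensorHom A : (A →ₗ[K] K) →ₗ[K] ((A ⊗[K] A) →ₗ[K] A ⊗[K] K)) ∘ₗ
        P.pair.flip))

@[simp] theorem lactPmap_apply (p : A) (b : B) : lactPmap P p b = P.lact b p := rfl

/-- the left action as a bilinear map -/
noncomputable def lactL : B →ₗ[K] A →ₗ[K] A :=
  LinearMap.mk₂ K P.lact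
    (fun b b' a => by
      simp [MHAPairing.lact, map_add, LinearMap.lTensor_add, LinearMap.add_apply])
    (fun c b a => by
      simp [MHAPairing.lact, map_smul, LinearMap.lTensor_smul, LinearMap.smul_apply])
    (fun b a a' => by simp [MHAPairing.lact, map_add])
    (fun c b a => by simp [MHAPairing.lact, map_smul])

@[simp] theorem lactL_apply (b : B) (a : A) : lactL P b a = P.lact b a := rfl

end Pairing

section Maps

variable {A : Type} [NonUnitalRing A] [Module K A] [SMulCommClass K A A] [IsScalarTower K A A]
variable {B : Type} [NonUnitalRing B] [Module K B] [SMulCommClass K B B] [IsScalarTower K B B]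
variable {hA : RegularMultiplierHopf K A} {hB : RegularMultiplierHopf K B}
variable (P : MHAPairing K A B hA hB)

/-- `R : b ⊗ a ↦ b₍₁₎ ▶ a ⊗ b₍₂₎` -/
noncomputable def Rmap : B ⊗[K] A →ₗ[K] A ⊗[K] B :=
  (TensorProduct.comm K B A).toLinearMap ∘ₗ
    (LinearMap.lTensor B (TensorProduct.lift (lactL P))) ∘ₗ
      (TensorProduct.assoc K B B A).toLinearMap ∘ₗ
        (LinearMap.rTensor A ((TensorProduct.comm K B B).toLinearMap ∘ₗ hB.comul))

theorem Rmap_tmul {ι : Type} (s : Finset ι) (b1 b2 : ι → B) (b : B)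
    (hb : hB.comul b = ∑ i ∈ s, b1 i ⊗ₜ[K] b2 i) (a : A) :
    Rmap P (b ⊗ₜ[K] a) = ∑ i ∈ s, P.lact (b1 i) a ⊗ₜ[K] b2 i := by
  simp only [Rmap, LinearMap.comp_apply, LinearMap.rTensor_tmul, LinearEquiv.coe_coe, hb,
    map_sum, TensorProduct.comm_tmul, TensorProduct.sum_tmul, TensorProduct.assoc_tmul,
    LinearMap.lTensor_tmul, TensorProduct.lift.tmul, lactL_apply]

/-- `R⁻¹ : a ⊗ b ↦ b₍₂₎ ⊗ S⁻¹(b₍₁₎) ▶ a` -/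
noncomputable def Rinv : A ⊗[K] B →ₗ[K] B ⊗[K] A :=
  (LinearMap.lTensor B
      (TensorProduct.lift (lactL P ∘ₗ hB.antipode.symm.toLinearMap))) ∘ₗ
    (TensorProduct.assoc K B B A).toLinearMap ∘ₗ
      (LinearMap.rTensor A ((TensorProduct.comm K B B).toLinearMap ∘ₗ hB.comul)) ∘ₗ
        (TensorProduct.comm K A B).toLinearMap

theorem Rinv_tmul {ι : Type} (s : Finset ι) (b1 b2 : ι → B) (b : B)
    (hb : hB.comul b = ∑ i ∈ s, b1 i ⊗ₜ[K] b2 i) (a : A) :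
    Rinv P (a ⊗ₜ[K] b) = ∑ i ∈ s, b2 i ⊗ₜ[K] P.lact (hB.antipode.symm (b1 i)) a := by
  simp only [Rinv, LinearMap.comp_apply, LinearEquiv.coe_coe, TensorProduct.comm_tmul,
    LinearMap.rTensor_tmul, hb, map_sum, TensorProduct.sum_tmul, TensorProduct.assoc_tmul,
    LinearMap.lTensor_tmul, TensorProduct.lift.tmul, lactL_apply]

/-- the Heisenberg double multiplication, as a map on the tensor square -/
noncomputable def hmulT : (A ⊗[K] B) ⊗[K] (A ⊗[K] B) →ₗ[K] A ⊗[K] B :=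
  (TensorProduct.map (LinearMap.mul' K A) (LinearMap.mul' K B)) ∘ₗ
    (TensorProduct.assoc K A A (B ⊗[K] B)).symm.toLinearMap ∘ₗ
      (LinearMap.lTensor A (TensorProduct.assoc K A B B).toLinearMap) ∘ₗ
        (LinearMap.lTensor A (LinearMap.rTensor B (Rmap P))) ∘ₗ
          (LinearMap.lTensor A (TensorProduct.assoc K B A B).symm.toLinearMap) ∘ₗ
            (TensorProduct.assoc K A B (A ⊗[K] B)).toLinearMap

noncomputable def hmul : (A ⊗[K] B) →ₗ[K] (A ⊗[K] B) →ₗ[K] (A ⊗[K] B) :=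
  TensorProduct.curry (hmulT P)

theorem hmul_tmul {ι : Type} (s : Finset ι) (b1 b2 : ι → B) (b : B)
    (hb : hB.comul b = ∑ i ∈ s, b1 i ⊗ₜ[K] b2 i) (a a' : A) (b' : B) :
    hmul P (a ⊗ₜ[K] b) (a' ⊗ₜ[K] b')
      = ∑ i ∈ s, (a * P.lact (b1 i) a') ⊗ₜ[K] (b2 i * b') := by
  simp only [hmul, TensorProduct.curry_apply, hmulT, LinearMap.comp_apply,
    LinearEquiv.coe_coe, TensorProduct.assoc_tmul, TensorProduct.assoc_symm_tmul,
    LinearMap.lTensor_tmul, LinearMap.rTensor_tmul, Rmap_tmul P s b1 b2 b hb,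
    TensorProduct.sum_tmul, TensorProduct.tmul_sum, map_sum, TensorProduct.map_tmul,
    LinearMap.mul'_apply]

/-- evaluation functional on `B ⊗ A` -/
noncomputable def evBA (a'' : A) (b'' : B) : B ⊗[K] A →ₗ[K] K :=
  (LinearMap.mul' K K) ∘ₗ TensorProduct.map (P.pair a'') (P.pair.flip b'')

@[simp] theorem evBA_tmul (a'' : A) (b'' : B) (x : B) (y : A) :
    evBA P a'' b'' (x ⊗ₜ[K] y) = P.pair a'' x * P.pair y b'' := by
  simp [evBA]

/-- evaluation functional on `A ⊗ B` -/
noncomputable def evAB (a'' : A) (b'' : B) : A ⊗[K] B →ₗ[K] K :=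
  (LinearMap.mul' K K) ∘ₗ TensorProduct.map (P.pair.flip b'') (P.pair a'')

@[simp] theorem evAB_tmul (a'' : A) (b'' : B) (x : A) (y : B) :
    evAB P a'' b'' (x ⊗ₜ[K] y) = P.pair x b'' * P.pair a'' y := by
  simp [evAB]

theorem sepBA0 (t : B ⊗[K] A) (h : ∀ (a'' : A) (b'' : B), evBA P a'' b'' t = 0) :
    t = 0 := by
  apply sep_left (fun a'' : A => P.pair a'') P.nondeg_right t
  intro a''
  apply P.nondeg_left
  intro b''
  have key : ∀ t : B ⊗[K] A,
      P.pair ((TensorProduct.lid K A) ((LinearMap.rTensor A (P.pair a'')) t)) b''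
        = evBA P a'' b'' t := by
    intro t
    induction t using TensorProduct.induction_on with
    | zero => simp
    | tmul x y => simp [smul_eq_mul]
    | add u v hu hv => simp [map_add, hu, hv]
  rw [key, h a'' b'']

theorem sepAB0 (t : A ⊗[K] B) (h : ∀ (a'' : A) (b'' : B), evAB P a'' b'' t = 0) :
    t = 0 := by
  apply sep_left (fun b'' : B => P.pair.flip b'') ?_ t ?_
  · intro u hu
    exact P.nondeg_left u fun b'' => hu b''
  · intro b''
    apply P.nondeg_right
    intro a''
    have key : ∀ t : A ⊗[K] B,
        P.pair a'' ((TensorProduct.lid K B) ((LinearMap.rTensor B (P.pair.flip b'')) t))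
          = evAB P a'' b'' t := by
      intro t
      induction t using TensorProduct.induction_on with
      | zero => simp
      | tmul x y => simp [smul_eq_mul, mul_comm]
      | add u v hu hv => simp [map_add, hu, hv]
    rw [key, h a'' b'']

theorem evBA_inj (t u : B ⊗[K] A)
    (h : ∀ (a'' : A) (b'' : B), evBA P a'' b'' t = evBA P a'' b'' u) : t = u := by
  have := sepBA0 P (t - u) (fun a'' b'' => by rw [map_sub, h, sub_self])
  exact sub_eq_zero.mp this

theorem evAB_inj (t u : A ⊗[K] B)
    (h : ∀ (a'' : A) (b'' : B), evAB P a'' b'' t = evAB P a'' b'' u) : t = u := by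
  have := sepAB0 P (t - u) (fun a'' b'' => by rw [map_sub, h, sub_self])
  exact sub_eq_zero.mp this

set_option maxHeartbeats 1000000 in
theorem RinvR_tmul (b : B) (a : A) : Rinv P (Rmap P (b ⊗ₜ[K] a)) = b ⊗ₜ[K] a := by
  rw [Rmap_tmul P (eS hB b) (e1 hB b) (e2 hB b) b (comul_eq hB b) a, map_sum]
  have step : ∀ j ∈ eS hB b, Rinv P (P.lact (e1 hB b j) a ⊗ₜ[K] e2 hB b j)
      = ∑ l ∈ eS hB (e2 hB b j), e2 hB (e2 hB b j) l ⊗ₜ[K]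
          P.lact (hB.antipode.symm (e1 hB (e2 hB b j) l) * e1 hB b j) a := by
    intro j _
    rw [Rinv_tmul P (eS hB (e2 hB b j)) _ _ _ (comul_eq hB (e2 hB b j))]
    exact Finset.sum_congr rfl fun l _ => by rw [lact_lact]
  rw [Finset.sum_congr rfl step]
  apply evBA_inj P
  intro a'' b''
  simp only [map_sum, evBA_tmul, pair_lact]
  set ψ : B ⊗[K] B →ₗ[K] K :=
    P.pair a ∘ₗ LinearMap.mulLeft K b'' ∘ₗ LinearMap.mul' K B ∘ₗ
      (TensorProduct.map hB.antipode.symm.toLinearMap LinearMap.id) ∘ₗ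
        (TensorProduct.comm K B B).toLinearMap with hψ
  set Φ : B ⊗[K] (B ⊗[K] B) →ₗ[K] K :=
    (LinearMap.mul' K K) ∘ₗ (TensorProduct.map ψ (P.pair a'')) ∘ₗ
      (TensorProduct.assoc K B B B).symm.toLinearMap with hΦ
  have Φap : ∀ x y z : B, Φ (x ⊗ₜ[K] (y ⊗ₜ[K] z))
      = P.pair a (b'' * (hB.antipode.symm y * x)) * P.pair a'' z := by
    intro x y z
    simp [hΦ, hψ]
  have tr := coassoc_sum hB Φ b
  simp only [Φap] at tr
  calc ∑ j ∈ eS hB b, ∑ l ∈ eS hB (e2 hB b j),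
        P.pair a'' (e2 hB (e2 hB b j) l) *
          P.pair a (b'' * (hB.antipode.symm (e1 hB (e2 hB b j) l) * e1 hB b j))
      = ∑ j ∈ eS hB b, ∑ l ∈ eS hB (e2 hB b j),
          P.pair a (b'' * (hB.antipode.symm (e1 hB (e2 hB b j) l) * e1 hB b j)) *
            P.pair a'' (e2 hB (e2 hB b j) l) :=
        Finset.sum_congr rfl fun j _ => Finset.sum_congr rfl fun l _ => mul_comm _ _
    _ = ∑ j ∈ eS hB b, ∑ l ∈ eS hB (e1 hB b j),
          P.pair a (b'' * (hB.antipode.symm (e2 hB (e1 hB b j) l) * e1 hB (e1 hB b j) l)) *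
            P.pair a'' (e2 hB b j) := tr.symm
    _ = ∑ j ∈ eS hB b, (hB.counit (e1 hB b j) * P.pair a b'') * P.pair a'' (e2 hB b j) := by
        refine Finset.sum_congr rfl fun j _ => ?_
        rw [← Finset.sum_mul, ← map_sum, ← Finset.mul_sum,
          sinv_left_cover hB (eS hB (e1 hB b j)) _ _ _ (comul_eq hB (e1 hB b j)) b'',
          map_smul, smul_eq_mul]
    _ = P.pair a'' b * P.pair a b'' := by
        conv_rhs => rw [← counit_left_elem hB (eS hB b) (e1 hB b) (e2 hB b) b (comul_eq hB b),
          map_sum, Finset.sum_mul]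
        refine Finset.sum_congr rfl fun j _ => ?_
        rw [map_smul, smul_eq_mul]
        ring

set_option maxHeartbeats 1000000 in
theorem RRinv_tmul (a : A) (b : B) : Rmap P (Rinv P (a ⊗ₜ[K] b)) = a ⊗ₜ[K] b := by
  rw [Rinv_tmul P (eS hB b) (e1 hB b) (e2 hB b) b (comul_eq hB b) a, map_sum]
  have step : ∀ j ∈ eS hB b,
      Rmap P (e2 hB b j ⊗ₜ[K] P.lact (hB.antipode.symm (e1 hB b j)) a)
      = ∑ l ∈ eS hB (e2 hB b j),
          P.lact (e1 hB (e2 hB b j) l * hB.antipode.symm (e1 hB b j)) a ⊗ₜ[K]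
            e2 hB (e2 hB b j) l := by
    intro j _
    rw [Rmap_tmul P (eS hB (e2 hB b j)) _ _ _ (comul_eq hB (e2 hB b j))]
    exact Finset.sum_congr rfl fun l _ => by rw [lact_lact]
  rw [Finset.sum_congr rfl step]
  apply evAB_inj P
  intro a'' b''
  simp only [map_sum, evAB_tmul, pair_lact]
  set ψ : B ⊗[K] B →ₗ[K] K :=
    P.pair a ∘ₗ LinearMap.mulLeft K b'' ∘ₗ LinearMap.mul' K B ∘ₗ
      (TensorProduct.map LinearMap.id hB.antipode.symm.toLinearMap) ∘ₗ
        (TensorProduct.comm K B B).toLinearMap with hψ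
  set Φ : B ⊗[K] (B ⊗[K] B) →ₗ[K] K :=
    (LinearMap.mul' K K) ∘ₗ (TensorProduct.map ψ (P.pair a'')) ∘ₗ
      (TensorProduct.assoc K B B B).symm.toLinearMap with hΦ
  have Φap : ∀ x y z : B, Φ (x ⊗ₜ[K] (y ⊗ₜ[K] z))
      = P.pair a (b'' * (y * hB.antipode.symm x)) * P.pair a'' z := by
    intro x y z
    simp [hΦ, hψ]
  have tr := coassoc_sum hB Φ b
  simp only [Φap] at tr
  calc ∑ j ∈ eS hB b, ∑ l ∈ eS hB (e2 hB b j),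
        P.pair a (b'' * (e1 hB (e2 hB b j) l * hB.antipode.symm (e1 hB b j))) *
          P.pair a'' (e2 hB (e2 hB b j) l)
      = ∑ j ∈ eS hB b, ∑ l ∈ eS hB (e1 hB b j),
          P.pair a (b'' * (e2 hB (e1 hB b j) l * hB.antipode.symm (e1 hB (e1 hB b j) l))) *
            P.pair a'' (e2 hB b j) := tr.symm
    _ = ∑ j ∈ eS hB b, (hB.counit (e1 hB b j) * P.pair a b'') * P.pair a'' (e2 hB b j) := by
        refine Finset.sum_congr rfl fun j _ => ?_
        rw [← Finset.sum_mul, ← map_sum, ← Finset.mul_sum,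
          sinv_right_cover hB (eS hB (e1 hB b j)) _ _ _ (comul_eq hB (e1 hB b j)) b'',
          map_smul, smul_eq_mul]
    _ = P.pair a b'' * P.pair a'' b := by
        conv_rhs => rw [← counit_left_elem hB (eS hB b) (e1 hB b) (e2 hB b) b (comul_eq hB b),
          map_sum, Finset.mul_sum]
        refine Finset.sum_congr rfl fun j _ => ?_
        rw [map_smul, smul_eq_mul]
        ring

theorem RinvR (t : B ⊗[K] A) : Rinv P (Rmap P t) = t := by
  induction t using TensorProduct.induction_on with
  | zero => simp
  | tmul b a => exact RinvR_tmul P b a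
  | add u v hu hv => rw [map_add, map_add, hu, hv]

theorem RRinv (t : A ⊗[K] B) : Rmap P (Rinv P t) = t := by
  induction t using TensorProduct.induction_on with
  | zero => simp
  | tmul a b => exact RRinv_tmul P a b
  | add u v hu hv => rw [map_add, map_add, hu, hv]

theorem R_bijective : Function.Bijective (Rmap P) :=
  ⟨fun x y hxy => by rw [← RinvR P x, hxy, RinvR P], fun y => ⟨Rinv P y, RRinv P y⟩⟩


end Maps

theorem comul_mul_exp {A : Type} [NonUnitalRing A] [Module K A] [SMulCommClass K A A]
    [IsScalarTower K A A] (h : RegularMultiplierHopf K A) (c d : A) :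
    h.comul (c * d) = ∑ p ∈ eS h c ×ˢ eS h d,
      (e1 h c p.1 * e1 h d p.2) ⊗ₜ[K] (e2 h c p.1 * e2 h d p.2) := by
  rw [h.comul_mul, comul_eq h c, comul_eq h d, Finset.sum_mul_sum, Finset.sum_product]
  simp [Algebra.TensorProduct.tmul_mul_tmul]

section Maps2

variable {A : Type} [NonUnitalRing A] [Module K A] [SMulCommClass K A A] [IsScalarTower K A A]
variable {B : Type} [NonUnitalRing B] [Module K B] [SMulCommClass K B B] [IsScalarTower K B B]
variable {hA : RegularMultiplierHopf K A} {hB : RegularMultiplierHopf K B}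
variable (P : MHAPairing K A B hA hB)

theorem hmul_assoc (x y z : A ⊗[K] B) :
    hmul P (hmul P x y) z = hmul P x (hmul P y z) := by
  induction x using TensorProduct.induction_on with
  | zero => simp
  | add u v hu hv => simp only [map_add, LinearMap.add_apply, hu, hv]
  | tmul a b =>
  induction y using TensorProduct.induction_on with
  | zero => simp
  | add u v hu hv => simp only [map_add, LinearMap.add_apply, map_zero, hu, hv]
  | tmul a' b' =>
  induction z using TensorProduct.induction_on with
  | zero => simp
  | add u v hu hv => simp only [map_add, hu, hv]
  | tmul a'' b'' =>
  rw [hmul_tmul P (eS hB b) (e1 hB b) (e2 hB b) b (comul_eq hB b) a a' b',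
    map_sum, LinearMap.sum_apply,
    hmul_tmul P (eS hB b') (e1 hB b') (e2 hB b') b' (comul_eq hB b') a' a'' b'',
    map_sum (hmul P (a ⊗ₜ[K] b))]
  have LHS1 : ∀ j ∈ eS hB b,
      hmul P ((a * P.lact (e1 hB b j) a') ⊗ₜ[K] (e2 hB b j * b')) (a'' ⊗ₜ[K] b'')
      = ∑ m ∈ eS hB b', ∑ k ∈ eS hB (e2 hB b j),
          ((a * P.lact (e1 hB b j) a') * P.lact (e1 hB (e2 hB b j) k * e1 hB b' m) a'')
            ⊗ₜ[K] ((e2 hB (e2 hB b j) k * e2 hB b' m) * b'') := by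
    intro j _
    rw [hmul_tmul P (eS hB (e2 hB b j) ×ˢ eS hB b')
      (fun p => e1 hB (e2 hB b j) p.1 * e1 hB b' p.2)
      (fun p => e2 hB (e2 hB b j) p.1 * e2 hB b' p.2)
      (e2 hB b j * b') (comul_mul_exp hB (e2 hB b j) b') (a * P.lact (e1 hB b j) a') a'' b'',
      Finset.sum_product]
    rw [Finset.sum_comm]
  rw [Finset.sum_congr rfl LHS1, Finset.sum_comm]
  refine Finset.sum_congr rfl fun m _ => ?_
  -- fixed m : transport along coassociativity of Δ_B
  set φ : B →ₗ[K] A := (lactL P).flip a' with hφ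
  set ψ2 : B →ₗ[K] A := ((lactL P).flip a'') ∘ₗ LinearMap.mulRight K (e1 hB b' m) with hψ2
  set Φ : B ⊗[K] (B ⊗[K] B) →ₗ[K] A ⊗[K] B :=
    (TensorProduct.map
      (LinearMap.mulLeft K a ∘ₗ LinearMap.mul' K A ∘ₗ TensorProduct.map φ ψ2)
      (LinearMap.mulRight K (e2 hB b' m * b''))) ∘ₗ
      (TensorProduct.assoc K B B B).symm.toLinearMap with hΦ
  have Φap : ∀ x y z : B, Φ (x ⊗ₜ[K] (y ⊗ₜ[K] z)) =
      (a * (P.lact x a' * P.lact (y * e1 hB b' m) a'')) ⊗ₜ[K] (z * (e2 hB b' m * b'')) := by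
    intro x y z
    simp [hΦ, hφ, hψ2, mul_assoc]
  have tr := coassoc_sum hB Φ b
  simp only [Φap] at tr
  calc ∑ j ∈ eS hB b, ∑ k ∈ eS hB (e2 hB b j),
        ((a * P.lact (e1 hB b j) a') * P.lact (e1 hB (e2 hB b j) k * e1 hB b' m) a'')
          ⊗ₜ[K] ((e2 hB (e2 hB b j) k * e2 hB b' m) * b'')
      = ∑ j ∈ eS hB b, ∑ k ∈ eS hB (e2 hB b j),
          (a * (P.lact (e1 hB b j) a' * P.lact (e1 hB (e2 hB b j) k * e1 hB b' m) a''))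
            ⊗ₜ[K] (e2 hB (e2 hB b j) k * (e2 hB b' m * b'')) := by
        refine Finset.sum_congr rfl fun j _ => Finset.sum_congr rfl fun k _ => ?_
        rw [mul_assoc, mul_assoc]
    _ = ∑ j ∈ eS hB b, ∑ k ∈ eS hB (e1 hB b j),
          (a * (P.lact (e1 hB (e1 hB b j) k) a' *
            P.lact (e2 hB (e1 hB b j) k * e1 hB b' m) a''))
            ⊗ₜ[K] (e2 hB b j * (e2 hB b' m * b'')) := tr.symm
    _ = ∑ j ∈ eS hB b,
          (a * P.lact (e1 hB b j) (a' * P.lact (e1 hB b' m) a''))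
            ⊗ₜ[K] (e2 hB b j * (e2 hB b' m * b'')) := by
        refine Finset.sum_congr rfl fun j _ => ?_
        rw [lact_mul P (eS hB (e1 hB b j)) (e1 hB (e1 hB b j)) (e2 hB (e1 hB b j))
          (e1 hB b j) (comul_eq hB (e1 hB b j)) a' (P.lact (e1 hB b' m) a'')]
        rw [Finset.sum_congr rfl (fun k _ => by rw [lact_lact] :
          ∀ k ∈ eS hB (e1 hB b j), P.lact (e1 hB (e1 hB b j) k) a' *
            P.lact (e2 hB (e1 hB b j) k) (P.lact (e1 hB b' m) a'')
            = P.lact (e1 hB (e1 hB b j) k) a' *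
              P.lact (e2 hB (e1 hB b j) k * e1 hB b' m) a''), Finset.mul_sum,
          TensorProduct.sum_tmul]
    _ = (hmul P (a ⊗ₜ[K] b)) ((a' * P.lact (e1 hB b' m) a'') ⊗ₜ[K] (e2 hB b' m * b'')) :=
        (hmul_tmul P (eS hB b) (e1 hB b) (e2 hB b) b (comul_eq hB b) a
          (a' * P.lact (e1 hB b' m) a'') (e2 hB b' m * b'')).symm

end Maps2

section Nondeg

variable {A : Type} [NonUnitalRing A] [Module K A] [SMulCommClass K A A] [IsScalarTower K A A]
variable {B : Type} [NonUnitalRing B] [Module K B] [SMulCommClass K B B] [IsScalarTower K B B]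
variable {hA : RegularMultiplierHopf K A} {hB : RegularMultiplierHopf K B}
variable (P : MHAPairing K A B hA hB)

theorem dpair_expandB (u w : A) (q : B) :
    dpair P (u ⊗ₜ[K] w) (hB.comul q)
      = ∑ k ∈ eS hB q, P.pair u (e1 hB q k) * P.pair w (e2 hB q k) := by
  rw [comul_eq hB q, map_sum]
  simp only [dpair_tmul]

theorem dpair_expandA (p : A) (v b' : B) :
    dpair P (hA.comul p) (v ⊗ₜ[K] b')
      = ∑ l ∈ eS hA p, P.pair (e1 hA p l) v * P.pair (e2 hA p l) b' := by
  rw [comul_eq hA p, map_sum, LinearMap.sum_apply]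
  simp only [dpair_tmul]

/-- separation by the right regular action `p ◀ ·` -/
theorem ract_sep (v : B) (hv : ∀ p : A, P.ract p v = 0) : v = 0 := by
  apply hB.mul_nondeg_left
  intro b''
  apply P.nondeg_right
  intro p
  have : P.pair p (v * b'') = P.pair (P.ract p v) b'' := by
    rw [pair_comul, dpair_expandA, ract_eq, map_sum]
    simp only [map_smul, LinearMap.sum_apply, LinearMap.smul_apply, smul_eq_mul]
  rw [this, hv p, map_zero, LinearMap.zero_apply]

/-- separation by the right regular action `q ◀ ·` -/
theorem ractB_sep (u : A) (hu : ∀ q : B, P.ractB q u = 0) : u = 0 := by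
  apply hA.mul_nondeg_left
  intro w
  apply P.nondeg_left
  intro q
  have : P.pair (u * w) q = P.pair w (P.ractB q u) := by
    rw [pair_mul, dpair_expandB, ractB_eq, map_sum]
    simp only [map_smul, smul_eq_mul]
  rw [this, hu q, map_zero]

/-- separation by the left regular action `· ▶ q` -/
theorem lactB_sep (u : A) (hu : ∀ q : B, P.lactB u q = 0) : u = 0 := by
  apply hA.mul_nondeg_right
  intro w
  apply P.nondeg_left
  intro q
  have : P.pair (w * u) q = P.pair w (P.lactB u q) := by
    rw [pair_mul, dpair_expandB, lactB_eq, map_sum]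
    simp only [map_smul, smul_eq_mul]
    exact Finset.sum_congr rfl fun k _ => by ring
  rw [this, hu q, map_zero]

/-- separation by the left regular action `· ▶ p` -/
theorem lactP_sep (v : B) (hv : ∀ p : A, P.lact v p = 0) : v = 0 := by
  apply hB.mul_nondeg_right
  intro w
  apply P.nondeg_right
  intro p
  have := pair_lact P v p w
  rw [hv p, map_zero, LinearMap.zero_apply] at this
  exact this.symm

theorem hmul_nondeg_left (x : A ⊗[K] B) (hx : ∀ y : A ⊗[K] B, hmul P x y = 0) :
    x = 0 := by
  obtain ⟨sx, xa, xb, hxrep⟩ := exists_repr x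
  -- the B-side T₂ map
  set W : B ⊗[K] B →ₗ[K] B ⊗[K] B :=
    (LinearMap.rTensor B (LinearMap.mul' K B)) ∘ₗ
      (TensorProduct.assoc K B B B).symm.toLinearMap ∘ₗ (LinearMap.lTensor B hB.comul)
    with hW
  have hWinj : Function.Injective W := by
    have : ⇑W = fun z : B ⊗[K] B =>
        (LinearMap.rTensor B (LinearMap.mul' K B))
          ((TensorProduct.assoc K B B B).symm ((LinearMap.lTensor B hB.comul) z)) := rfl
    rw [this]
    exact hB.T2_bijective.1
  -- step B : the quadruple-sum element vanishes
  have stepB : ∀ (q : B) (p : A),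
      (∑ i ∈ sx, ∑ j ∈ eS hB (xb i), ∑ k ∈ eS hB q, ∑ l ∈ eS hA p,
        (P.pair (xa i) (e1 hB q k) * P.pair (e1 hA p l) (e2 hB (xb i) j)) •
          ((e2 hB q k * e1 hB (xb i) j) ⊗ₜ[K] e2 hA p l) : B ⊗[K] A) = 0 := by
    intro q p
    apply sepBA0 P
    intro a' b'
    have hrhs := congrArg (evAB P p q) (hx (a' ⊗ₜ[K] b'))
    rw [map_zero] at hrhs
    rw [hxrep, map_sum, LinearMap.sum_apply, map_sum] at hrhs
    have expand : ∀ i ∈ sx,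
        evAB P p q (hmul P (xa i ⊗ₜ[K] xb i) (a' ⊗ₜ[K] b'))
          = ∑ j ∈ eS hB (xb i), ∑ k ∈ eS hB q, ∑ l ∈ eS hA p,
              (P.pair (xa i) (e1 hB q k) * P.pair (e1 hA p l) (e2 hB (xb i) j)) *
                (P.pair a' (e2 hB q k * e1 hB (xb i) j) * P.pair (e2 hA p l) b') := by
      intro i _
      rw [hmul_tmul P (eS hB (xb i)) _ _ _ (comul_eq hB (xb i)) (xa i) a' b', map_sum]
      refine Finset.sum_congr rfl fun j _ => ?_
      rw [evAB_tmul, pair_mul, dpair_expandB, pair_comul, dpair_expandA,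
        Finset.sum_mul_sum]
      refine Finset.sum_congr rfl fun k _ => Finset.sum_congr rfl fun l _ => ?_
      rw [pair_lact]
      ring
    rw [Finset.sum_congr rfl expand] at hrhs
    rw [map_sum]
    simp only [map_sum, map_smul, evBA_tmul, smul_eq_mul]
    rw [← hrhs]
  -- step C : eliminate p
  have stepC : ∀ q : B,
      (∑ i ∈ sx, ∑ j ∈ eS hB (xb i), ∑ k ∈ eS hB q,
        P.pair (xa i) (e1 hB q k) •
          ((e2 hB q k * e1 hB (xb i) j) ⊗ₜ[K] e2 hB (xb i) j) : B ⊗[K] B) = 0 := by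
    intro q
    apply sep_right_mod (fun p : A => ractPmap P p) (fun v hv => ract_sep P v fun p => by
      have := hv p; rwa [ractPmap_apply] at this)
    intro p
    rw [map_sum]
    have : ∀ i ∈ sx, (LinearMap.lTensor B (ractPmap P p))
        (∑ j ∈ eS hB (xb i), ∑ k ∈ eS hB q,
          P.pair (xa i) (e1 hB q k) •
            ((e2 hB q k * e1 hB (xb i) j) ⊗ₜ[K] e2 hB (xb i) j))
        = ∑ j ∈ eS hB (xb i), ∑ k ∈ eS hB q, ∑ l ∈ eS hA p,
            (P.pair (xa i) (e1 hB q k) * P.pair (e1 hA p l) (e2 hB (xb i) j)) •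
              ((e2 hB q k * e1 hB (xb i) j) ⊗ₜ[K] e2 hA p l) := by
      intro i _
      rw [map_sum]
      refine Finset.sum_congr rfl fun j _ => ?_
      rw [map_sum]
      refine Finset.sum_congr rfl fun k _ => ?_
      rw [map_smul, LinearMap.lTensor_tmul, ractPmap_apply, ract_eq,
        TensorProduct.tmul_sum, Finset.smul_sum]
      refine Finset.sum_congr rfl fun l _ => ?_
      rw [TensorProduct.tmul_smul, smul_smul]
    rw [Finset.sum_congr rfl this]
    exact stepB q p
  -- step D : apply injectivity of T₂
  have stepD : ∀ q : B,
      (∑ i ∈ sx, ∑ k ∈ eS hB q,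
        P.pair (xa i) (e1 hB q k) • (e2 hB q k ⊗ₜ[K] xb i) : B ⊗[K] B) = 0 := by
    intro q
    apply hWinj
    rw [map_zero, map_sum]
    have : ∀ i ∈ sx, W (∑ k ∈ eS hB q, P.pair (xa i) (e1 hB q k) • (e2 hB q k ⊗ₜ[K] xb i))
        = ∑ j ∈ eS hB (xb i), ∑ k ∈ eS hB q,
            P.pair (xa i) (e1 hB q k) •
              ((e2 hB q k * e1 hB (xb i) j) ⊗ₜ[K] e2 hB (xb i) j) := by
      intro i _
      rw [map_sum, Finset.sum_comm]
      refine Finset.sum_congr rfl fun k _ => ?_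
      rw [map_smul, hW, LinearMap.comp_apply, LinearMap.comp_apply, LinearMap.lTensor_tmul,
        comul_eq hB (xb i), TensorProduct.tmul_sum, map_sum, map_sum, Finset.smul_sum]
      refine Finset.sum_congr rfl fun j _ => ?_
      simp only [LinearEquiv.coe_coe, TensorProduct.assoc_symm_tmul, LinearMap.rTensor_tmul,
        LinearMap.mul'_apply]
    rw [Finset.sum_congr rfl this]
    exact stepC q
  -- step E : eliminate q and conclude
  apply sep_left_mod (fun q : B => ractBmap P q) (fun u hu => ractB_sep P u fun q => by
    have := hu q; rwa [ractBmap_apply] at this)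
  intro q
  rw [hxrep, map_sum]
  have : ∀ i ∈ sx, (LinearMap.rTensor B (ractBmap P q)) (xa i ⊗ₜ[K] xb i)
      = ∑ k ∈ eS hB q, P.pair (xa i) (e1 hB q k) • (e2 hB q k ⊗ₜ[K] xb i) := by
    intro i _
    rw [LinearMap.rTensor_tmul, ractBmap_apply, ractB_eq, TensorProduct.sum_tmul]
    exact Finset.sum_congr rfl fun k _ => by rw [TensorProduct.smul_tmul']
  rw [Finset.sum_congr rfl this]
  exact stepD q

theorem hmul_nondeg_right (x : A ⊗[K] B) (hx : ∀ y : A ⊗[K] B, hmul P y x = 0) :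
    x = 0 := by
  obtain ⟨sx, xa, xb, hxrep⟩ := exists_repr x
  -- the A-side T₁ map
  set W1 : A ⊗[K] A →ₗ[K] A ⊗[K] A :=
    (LinearMap.lTensor A (LinearMap.mul' K A)) ∘ₗ
      (TensorProduct.assoc K A A A).toLinearMap ∘ₗ (LinearMap.rTensor A hA.comul)
    with hW1
  have hW1inj : Function.Injective W1 := by
    have : ⇑W1 = fun z : A ⊗[K] A =>
        (LinearMap.lTensor A (LinearMap.mul' K A))
          ((TensorProduct.assoc K A A A) ((LinearMap.rTensor A hA.comul) z)) := rfl
    rw [this]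
    exact hA.T1_bijective.1
  have W1ap : ∀ (c w : A), W1 (c ⊗ₜ[K] w)
      = ∑ m ∈ eS hA c, e1 hA c m ⊗ₜ[K] (e2 hA c m * w) := by
    intro c w
    simp only [hW1, LinearMap.comp_apply, LinearMap.rTensor_tmul]
    rw [comul_eq hA c, TensorProduct.sum_tmul, map_sum, map_sum]
    refine Finset.sum_congr rfl fun m _ => ?_
    simp only [LinearEquiv.coe_coe, TensorProduct.assoc_tmul, LinearMap.lTensor_tmul,
      LinearMap.mul'_apply]
  have stepB : ∀ (q : B) (p : A),
      (∑ i ∈ sx, ∑ k ∈ eS hB q, ∑ l ∈ eS hA p, ∑ m ∈ eS hA (xa i),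
        (P.pair (e1 hA (xa i) m) (e2 hB q k) * P.pair (e2 hA p l) (xb i)) •
          (e1 hB q k ⊗ₜ[K] (e2 hA (xa i) m * e1 hA p l)) : B ⊗[K] A) = 0 := by
    intro q p
    apply sepBA0 P
    intro a' b'
    set F : ℕ → ℕ → ℕ → ℕ → ℕ → K := fun i j k l m =>
      (P.pair a' (e1 hB q k) * (P.pair (e1 hA (xa i) m) (e2 hB q k) *
         P.pair (e2 hA (xa i) m) (e1 hB b' j))) *
      (P.pair (e1 hA p l) (e2 hB b' j) * P.pair (e2 hA p l) (xb i)) with hF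
    have hrhs := congrArg (evAB P p q) (hx (a' ⊗ₜ[K] b'))
    rw [map_zero, hxrep, map_sum (hmul P (a' ⊗ₜ[K] b')), map_sum] at hrhs
    have expand : ∀ i ∈ sx,
        evAB P p q (hmul P (a' ⊗ₜ[K] b') (xa i ⊗ₜ[K] xb i))
          = ∑ j ∈ eS hB b', ∑ k ∈ eS hB q, ∑ l ∈ eS hA p, ∑ m ∈ eS hA (xa i),
              F i j k l m := by
      intro i _
      rw [hmul_tmul P (eS hB b') (e1 hB b') (e2 hB b') b' (comul_eq hB b') a' (xa i) (xb i),
        map_sum]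
      refine Finset.sum_congr rfl fun j _ => ?_
      rw [evAB_tmul, pair_mul, dpair_expandB, pair_comul, dpair_expandA,
        Finset.sum_mul_sum]
      refine Finset.sum_congr rfl fun k _ => Finset.sum_congr rfl fun l _ => ?_
      rw [pair_lact, pair_comul, dpair_expandA, Finset.mul_sum, Finset.sum_mul]
    rw [Finset.sum_congr rfl expand] at hrhs
    have e1' : evBA P a' b'
        (∑ i ∈ sx, ∑ k ∈ eS hB q, ∑ l ∈ eS hA p, ∑ m ∈ eS hA (xa i),
          (P.pair (e1 hA (xa i) m) (e2 hB q k) * P.pair (e2 hA p l) (xb i)) •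
            (e1 hB q k ⊗ₜ[K] (e2 hA (xa i) m * e1 hA p l)))
        = ∑ i ∈ sx, ∑ k ∈ eS hB q, ∑ l ∈ eS hA p, ∑ m ∈ eS hA (xa i),
            ∑ j ∈ eS hB b', F i j k l m := by
      simp only [map_sum, map_smul, evBA_tmul, smul_eq_mul]
      refine Finset.sum_congr rfl fun i _ => Finset.sum_congr rfl fun k _ =>
        Finset.sum_congr rfl fun l _ => Finset.sum_congr rfl fun m _ => ?_
      rw [pair_mul P (e2 hA (xa i) m) (e1 hA p l) b', dpair_expandB, Finset.mul_sum,
        Finset.mul_sum]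
      refine Finset.sum_congr rfl fun j _ => ?_
      rw [hF]
      ring
    have e2' : (∑ i ∈ sx, ∑ k ∈ eS hB q, ∑ l ∈ eS hA p, ∑ m ∈ eS hA (xa i),
          ∑ j ∈ eS hB b', F i j k l m)
        = ∑ i ∈ sx, ∑ j ∈ eS hB b', ∑ k ∈ eS hB q, ∑ l ∈ eS hA p, ∑ m ∈ eS hA (xa i),
            F i j k l m := by
      refine Finset.sum_congr rfl fun i _ => ?_
      calc ∑ k ∈ eS hB q, ∑ l ∈ eS hA p, ∑ m ∈ eS hA (xa i), ∑ j ∈ eS hB b',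
            F i j k l m
          = ∑ k ∈ eS hB q, ∑ l ∈ eS hA p, ∑ j ∈ eS hB b', ∑ m ∈ eS hA (xa i),
              F i j k l m :=
            Finset.sum_congr rfl fun k _ => Finset.sum_congr rfl fun l _ =>
              Finset.sum_comm
        _ = ∑ k ∈ eS hB q, ∑ j ∈ eS hB b', ∑ l ∈ eS hA p, ∑ m ∈ eS hA (xa i),
              F i j k l m :=
            Finset.sum_congr rfl fun k _ => Finset.sum_comm
        _ = ∑ j ∈ eS hB b', ∑ k ∈ eS hB q, ∑ l ∈ eS hA p, ∑ m ∈ eS hA (xa i),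
              F i j k l m := Finset.sum_comm
    rw [e1', e2']
    exact hrhs
  have stepC : ∀ p : A,
      (∑ i ∈ sx, ∑ l ∈ eS hA p, ∑ m ∈ eS hA (xa i),
        P.pair (e2 hA p l) (xb i) •
          (e1 hA (xa i) m ⊗ₜ[K] (e2 hA (xa i) m * e1 hA p l)) : A ⊗[K] A) = 0 := by
    intro p
    apply sep_left_mod (fun q : B => lactBmap P q) (fun u hu => lactB_sep P u fun q => by
      have := hu q; rwa [lactBmap_apply] at this)
    intro q
    rw [map_sum]
    have : ∀ i ∈ sx, (LinearMap.rTensor A (lactBmap P q))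
        (∑ l ∈ eS hA p, ∑ m ∈ eS hA (xa i),
          P.pair (e2 hA p l) (xb i) •
            (e1 hA (xa i) m ⊗ₜ[K] (e2 hA (xa i) m * e1 hA p l)))
        = ∑ k ∈ eS hB q, ∑ l ∈ eS hA p, ∑ m ∈ eS hA (xa i),
            (P.pair (e1 hA (xa i) m) (e2 hB q k) * P.pair (e2 hA p l) (xb i)) •
              (e1 hB q k ⊗ₜ[K] (e2 hA (xa i) m * e1 hA p l)) := by
      intro i _
      rw [map_sum]
      calc ∑ l ∈ eS hA p, (LinearMap.rTensor A (lactBmap P q))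
            (∑ m ∈ eS hA (xa i), P.pair (e2 hA p l) (xb i) •
              (e1 hA (xa i) m ⊗ₜ[K] (e2 hA (xa i) m * e1 hA p l)))
          = ∑ l ∈ eS hA p, ∑ m ∈ eS hA (xa i), ∑ k ∈ eS hB q,
              (P.pair (e1 hA (xa i) m) (e2 hB q k) * P.pair (e2 hA p l) (xb i)) •
                (e1 hB q k ⊗ₜ[K] (e2 hA (xa i) m * e1 hA p l)) := by
            refine Finset.sum_congr rfl fun l _ => ?_
            rw [map_sum]
            refine Finset.sum_congr rfl fun m _ => ?_
            rw [map_smul, LinearMap.rTensor_tmul, lactBmap_apply, lactB_eq,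
              TensorProduct.sum_tmul, Finset.smul_sum]
            refine Finset.sum_congr rfl fun k _ => ?_
            rw [TensorProduct.smul_tmul', smul_smul, mul_comm, TensorProduct.smul_tmul']
        _ = ∑ l ∈ eS hA p, ∑ k ∈ eS hB q, ∑ m ∈ eS hA (xa i),
              (P.pair (e1 hA (xa i) m) (e2 hB q k) * P.pair (e2 hA p l) (xb i)) •
                (e1 hB q k ⊗ₜ[K] (e2 hA (xa i) m * e1 hA p l)) :=
            Finset.sum_congr rfl fun l _ => Finset.sum_comm
        _ = ∑ k ∈ eS hB q, ∑ l ∈ eS hA p, ∑ m ∈ eS hA (xa i),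
              (P.pair (e1 hA (xa i) m) (e2 hB q k) * P.pair (e2 hA p l) (xb i)) •
                (e1 hB q k ⊗ₜ[K] (e2 hA (xa i) m * e1 hA p l)) := Finset.sum_comm
    rw [Finset.sum_congr rfl this]
    exact stepB q p
  have stepD : ∀ p : A,
      (∑ i ∈ sx, ∑ l ∈ eS hA p,
        P.pair (e2 hA p l) (xb i) • (xa i ⊗ₜ[K] e1 hA p l) : A ⊗[K] A) = 0 := by
    intro p
    apply hW1inj
    rw [map_zero, map_sum]
    have : ∀ i ∈ sx, W1 (∑ l ∈ eS hA p, P.pair (e2 hA p l) (xb i) • (xa i ⊗ₜ[K] e1 hA p l))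
        = ∑ l ∈ eS hA p, ∑ m ∈ eS hA (xa i),
            P.pair (e2 hA p l) (xb i) •
              (e1 hA (xa i) m ⊗ₜ[K] (e2 hA (xa i) m * e1 hA p l)) := by
      intro i _
      rw [map_sum]
      refine Finset.sum_congr rfl fun l _ => ?_
      rw [map_smul, W1ap, Finset.smul_sum]
    rw [Finset.sum_congr rfl this]
    exact stepC p
  apply sep_right_mod (fun p : A => lactPmap P p) (fun v hv => lactP_sep P v fun p => by
    have := hv p; rwa [lactPmap_apply] at this)
  intro p
  rw [hxrep, map_sum]
  have : ∀ i ∈ sx, (LinearMap.lTensor A (lactPmap P p)) (xa i ⊗ₜ[K] xb i)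
      = ∑ l ∈ eS hA p, P.pair (e2 hA p l) (xb i) • (xa i ⊗ₜ[K] e1 hA p l) := by
    intro i _
    rw [LinearMap.lTensor_tmul, lactPmap_apply, lact_eq, TensorProduct.tmul_sum]
    exact Finset.sum_congr rfl fun l _ => by rw [TensorProduct.tmul_smul]
  rw [Finset.sum_congr rfl this]
  exact stepD p

end Nondeg

end HDouble


/-- Let `⟨A, B⟩` be a pairing of regular multiplier Hopf algebras over a
field `K`.  The map `R : B ⊗ A → A ⊗ B` defined by `R(b ⊗ a) = b₍₁₎ ▶ a ⊗ b₍₂₎` is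
bijective with inverse `R⁻¹(a ⊗ b) = b₍₂₎ ⊗ S⁻¹(b₍₁₎) ▶ a`; consequently the Heisenberg
double product `(a # b)(a' # b') = a(b₍₁₎ ▶ a') # b₍₂₎ b'` on `A ⊗ B` is a non-degenerate
associative product. -/
theorem heisenberg_double_product_nondegenerate_associative
    {K : Type} [Field K]
    {A : Type} [NonUnitalRing A] [Module K A] [SMulCommClass K A A] [IsScalarTower K A A]
    {B : Type} [NonUnitalRing B] [Module K B] [SMulCommClass K B B] [IsScalarTower K B B]
    {hA : RegularMultiplierHopf K A} {hB : RegularMultiplierHopf K B}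
    (P : MHAPairing K A B hA hB) :
    ∃ (R : B ⊗[K] A →ₗ[K] A ⊗[K] B) (R' : A ⊗[K] B →ₗ[K] B ⊗[K] A),
      -- `R(b ⊗ a) = b₍₁₎ ▶ a ⊗ b₍₂₎`
      (∀ (b : B) (a : A) (s : Finset ℕ) (b1 b2 : ℕ → B),
        hB.comul b = ∑ i ∈ s, b1 i ⊗ₜ[K] b2 i →
        R (b ⊗ₜ[K] a) = ∑ i ∈ s, (P.lact (b1 i) a) ⊗ₜ[K] b2 i) ∧
      -- `R⁻¹(a ⊗ b) = b₍₂₎ ⊗ S⁻¹(b₍₁₎) ▶ a`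
      (∀ (a : A) (b : B) (s : Finset ℕ) (b1 b2 : ℕ → B),
        hB.comul b = ∑ i ∈ s, b1 i ⊗ₜ[K] b2 i →
        R' (a ⊗ₜ[K] b) = ∑ i ∈ s, (b2 i) ⊗ₜ[K] (P.lact (hB.antipode.symm (b1 i)) a)) ∧
      Function.Bijective R ∧
      (∀ x : B ⊗[K] A, R' (R x) = x) ∧ (∀ y : A ⊗[K] B, R (R' y) = y) ∧
      -- the Heisenberg double product
      ∃ hmul : (A ⊗[K] B) →ₗ[K] (A ⊗[K] B) →ₗ[K] (A ⊗[K] B),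
        -- `(a # b)(a' # b') = a(b₍₁₎ ▶ a') # b₍₂₎ b'`
        (∀ (a a' : A) (b b' : B) (s : Finset ℕ) (b1 b2 : ℕ → B),
          hB.comul b = ∑ i ∈ s, b1 i ⊗ₜ[K] b2 i →
          hmul (a ⊗ₜ[K] b) (a' ⊗ₜ[K] b')
            = ∑ i ∈ s, (a * P.lact (b1 i) a') ⊗ₜ[K] ((b2 i) * b')) ∧
        -- associativity
        (∀ x y z : A ⊗[K] B, hmul (hmul x y) z = hmul x (hmul y z)) ∧
        -- non-degeneracy of the product
        (∀ x : A ⊗[K] B, (∀ y : A ⊗[K] B, hmul x y = 0) → x = 0) ∧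
        (∀ x : A ⊗[K] B, (∀ y : A ⊗[K] B, hmul y x = 0) → x = 0) := by
  classical
  refine ⟨HDouble.Rmap P, HDouble.Rinv P, ?_, ?_, HDouble.R_bijective P,
    HDouble.RinvR P, HDouble.RRinv P, HDouble.hmul P, ?_, HDouble.hmul_assoc P, ?_, ?_⟩
  · intro b a s b1 b2 hb
    exact HDouble.Rmap_tmul P s b1 b2 b hb a
  · intro a b s b1 b2 hb
    exact HDouble.Rinv_tmul P s b1 b2 b hb a
  · intro a a' b b' s b1 b2 hb
    exact HDouble.hmul_tmul P s b1 b2 b hb a a' b'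
  · exact fun x hx => HDouble.hmul_nondeg_left P x hx
  · exact fun x hx => HDouble.hmul_nondeg_right P x hx
end

section
/- Let D be a regular multiplier Hopf algebra and let X and Y be two (left-left) Yetter-Drinfel'd D-module algebras. Then their braided product X∝Y, namely the vector space X⊗Y with product (x∝y)(x'∝y') = x(y_(-1)·x') ∝ y_(0)y', is again a (left-left) Yetter-Drinfel'd D-module algebra with the tensor product action and coaction. -/
open TensorProduct LinearMap
open scoped TensorProduct

/-- A (left-left) Yetter-Drinfel'd module algebra over a regular multiplier Hopf algebra
`D`: a non-degenerate algebra `X` which is a unital left `D`-module algebra and a left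
`D`-comodule algebra, such that the Yetter-Drinfel'd compatibility condition
`(d₍₁₎ · x)₍₋₁₎ d₍₂₎ d' ⊗ (d₍₁₎ · x)₍₀₎ = d₍₁₎ x₍₋₁₎ d' ⊗ d₍₂₎ · x₍₀₎` holds. -/
structure YetterDrinfeldModuleAlgebra (K : Type) [Field K]
    (D : Type) [NonUnitalRing D] [Module K D] [SMulCommClass K D D] [IsScalarTower K D D]
    (X : Type) [NonUnitalRing X] [Module K X] [SMulCommClass K X X] [IsScalarTower K X X]
    (hD : RegularMultiplierHopf K D) : Type where
  act : D →ₗ[K] X →ₗ[K] X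
  coact : X →ₗ[K] D ⊗[K] X
  act_act : ∀ (d d' : D) (x : X), act (d * d') x = act d (act d' x)
  act_unital : Submodule.span K {y : X | ∃ (d : D) (x : X), act d x = y} = ⊤
  act_mul : ∀ (d : D) (s : Finset ℕ) (d1 d2 : ℕ → D),
    hD.comul d = ∑ i ∈ s, d1 i ⊗ₜ[K] d2 i →
    ∀ x y : X, act d (x * y) = ∑ i ∈ s, act (d1 i) x * act (d2 i) y
  coact_coassoc : ∀ x : X,
    (TensorProduct.assoc K D D X) ((LinearMap.rTensor X hD.comul) (coact x))
      = (LinearMap.lTensor D coact) (coact x)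
  coact_counit : ∀ x : X,
    (TensorProduct.lid K X) ((LinearMap.rTensor X hD.counit) (coact x)) = x
  coact_mul : ∀ x y : X, coact (x * y) = coact x * coact y
  yd : ∀ (d : D) (s : Finset ℕ) (d1 d2 : ℕ → D),
    hD.comul d = ∑ i ∈ s, d1 i ⊗ₜ[K] d2 i →
    ∀ (d' : D) (x : X),
      ∑ i ∈ s, (LinearMap.rTensor X (LinearMap.mulRight K (d2 i * d')))
          (coact (act (d1 i) x))
        = ∑ i ∈ s, (TensorProduct.map
            ((LinearMap.mulLeft K (d1 i)) ∘ₗ (LinearMap.mulRight K d'))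
            (act (d2 i))) (coact x)

/-! Helper section -/
namespace BPAux

theorem exists_rep {K : Type} [Field K] {V W : Type} [AddCommGroup V] [Module K V]
    [AddCommGroup W] [Module K W] (t : V ⊗[K] W) :
    ∃ (s : Finset ℕ) (f : ℕ → V) (g : ℕ → W), t = ∑ i ∈ s, f i ⊗ₜ[K] g i := by
  have h : ∃ l : List (V × W), t = (l.map fun p => p.1 ⊗ₜ[K] p.2).sum := by
    induction t with
    | zero => exact ⟨[], rfl⟩
    | tmul a b => exact ⟨[(a, b)], by simp⟩
    | add u v hu hv =>
      obtain ⟨l1, h1⟩ := hu; obtain ⟨l2, h2⟩ := hv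
      exact ⟨l1 ++ l2, by simp [h1, h2]⟩
  obtain ⟨l, hl⟩ := h
  refine ⟨Finset.range l.length, fun i => (l.getD i (0, 0)).1, fun i => (l.getD i (0, 0)).2, ?_⟩
  rw [hl]; clear hl
  induction l with
  | nil => simp
  | cons a l ih =>
    rw [List.map_cons, List.sum_cons, List.length_cons, Finset.sum_range_succ']
    simp only [List.getD_cons_succ, List.getD_cons_zero]
    rw [ih, add_comm]

set_option linter.unusedSectionVars false

theorem cancel_right {K : Type} [Field K]
    {D : Type} [NonUnitalRing D] [Module K D] [SMulCommClass K D D] [IsScalarTower K D D]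
    {V : Type} [AddCommGroup V] [Module K V]
    (hnd : ∀ a : D, (∀ x : D, a * x = 0) → a = 0)
    (t : D ⊗[K] V) (h : ∀ d' : D, LinearMap.rTensor V (LinearMap.mulRight K d') t = 0) :
    t = 0 := by
  classical
  let b : Module.Basis _ K V := Module.Basis.ofVectorSpace K V
  let E : D ⊗[K] V ≃ₗ[K] _ →₀ D :=
    (TensorProduct.congr (LinearEquiv.refl K D) b.repr).trans
      (TensorProduct.finsuppScalarRight K K D _)
  have key : ∀ (t : D ⊗[K] V) (d' : D) (i),
      E (LinearMap.rTensor V (LinearMap.mulRight K d') t) i = E t i * d' := by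
    intro t d' i
    induction t with
    | zero => simp
    | tmul a v =>
      simp [E, TensorProduct.finsuppScalarRight_apply_tmul_apply, smul_mul_assoc]
    | add u v hu hv => simp [hu, hv, add_mul]
  have h0 : ∀ i, E t i = 0 := by
    intro i
    refine hnd _ (fun d' => ?_)
    rw [← key t d' i, h d', map_zero]; rfl
  have : E t = 0 := Finsupp.ext h0
  simpa using congrArg E.symm this

end BPAux

namespace BP
set_option maxHeartbeats 1000000
set_option synthInstance.maxHeartbeats 400000
set_option linter.unusedSectionVars false

variable {K : Type} [Field K]
variable {D : Type} [NonUnitalRing D] [Module K D] [SMulCommClass K D D] [IsScalarTower K D D]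
variable {X : Type} [NonUnitalRing X] [Module K X] [SMulCommClass K X X] [IsScalarTower K X X]
variable {Y : Type} [NonUnitalRing Y] [Module K Y] [SMulCommClass K Y Y] [IsScalarTower K Y Y]

/-- multiply the `D`-legs and tensor the rest -/
noncomputable def M2 (K : Type) [Field K] (D : Type) [NonUnitalRing D] [Module K D]
    [SMulCommClass K D D] [IsScalarTower K D D]
    (V W : Type) [AddCommGroup V] [Module K V] [AddCommGroup W] [Module K W] :
    (D ⊗[K] V) ⊗[K] (D ⊗[K] W) →ₗ[K] D ⊗[K] (V ⊗[K] W) :=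
  LinearMap.rTensor (V ⊗[K] W) (LinearMap.mul' K D) ∘ₗ
    (TensorProduct.tensorTensorTensorComm K D V D W).toLinearMap

@[simp] theorem M2_tmul (V W : Type) [AddCommGroup V] [Module K V] [AddCommGroup W] [Module K W]
    (d e : D) (v : V) (w : W) :
    M2 K D V W ((d ⊗ₜ[K] v) ⊗ₜ[K] (e ⊗ₜ[K] w)) = (d * e) ⊗ₜ[K] (v ⊗ₜ[K] w) := by
  simp [M2, TensorProduct.tensorTensorTensorComm_tmul]

variable (hD : RegularMultiplierHopf K D)
variable (XA : YetterDrinfeldModuleAlgebra K D X hD)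
variable (YA : YetterDrinfeldModuleAlgebra K D Y hD)

noncomputable def Phi : D ⊗[K] Y →ₗ[K] (X ⊗[K] Y →ₗ[K] X ⊗[K] Y) :=
  (TensorProduct.homTensorHomMap (RingHom.id K) X Y X Y) ∘ₗ TensorProduct.map XA.act (LinearMap.mul K Y)

@[simp] theorem Phi_tmul (d : D) (z : Y) (u : X) (v : Y) :
    Phi hD XA (d ⊗ₜ[K] z) (u ⊗ₜ[K] v) = XA.act d u ⊗ₜ[K] (z * v) := by
  simp [Phi]

noncomputable def bmul : X ⊗[K] Y →ₗ[K] X ⊗[K] Y →ₗ[K] X ⊗[K] Y :=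
  TensorProduct.lift (LinearMap.mk₂ K
    (fun x y => LinearMap.rTensor Y ((LinearMap.mul K X) x) ∘ₗ Phi hD XA (YA.coact y))
    (fun x x' y => by rw [map_add, LinearMap.rTensor_add, LinearMap.add_comp])
    (fun c x y => by rw [map_smul, LinearMap.rTensor_smul, LinearMap.smul_comp])
    (fun x y y' => by rw [map_add, map_add, LinearMap.comp_add])
    (fun c x y => by rw [map_smul, map_smul, LinearMap.comp_smul]))

theorem bmul_tmul (x : X) (y : Y) :
    bmul hD XA YA (x ⊗ₜ[K] y)
      = LinearMap.rTensor Y ((LinearMap.mul K X) x) ∘ₗ Phi hD XA (YA.coact y) := by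
  simp [bmul]

theorem bmul_expand (x x' : X) (y y' : Y) (s : Finset ℕ) (c : ℕ → D) (y0 : ℕ → Y)
    (hy : YA.coact y = ∑ k ∈ s, c k ⊗ₜ[K] y0 k) :
    bmul hD XA YA (x ⊗ₜ[K] y) (x' ⊗ₜ[K] y')
      = ∑ k ∈ s, (x * XA.act (c k) x') ⊗ₜ[K] (y0 k * y') := by
  rw [bmul_tmul]
  simp [hy, map_sum, LinearMap.sum_apply]

/-- the representation `D ⊗ D → End (X ⊗ Y)` -/
noncomputable def rep : D ⊗[K] D →ₗ[K] (X ⊗[K] Y →ₗ[K] X ⊗[K] Y) :=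
  (TensorProduct.homTensorHomMap (RingHom.id K) X Y X Y) ∘ₗ TensorProduct.map XA.act YA.act

@[simp] theorem rep_tmul (d e : D) (u : X) (v : Y) :
    rep hD XA YA (d ⊗ₜ[K] e) (u ⊗ₜ[K] v) = XA.act d u ⊗ₜ[K] YA.act e v := by
  simp [rep]

noncomputable def tact : D →ₗ[K] (X ⊗[K] Y →ₗ[K] X ⊗[K] Y) :=
  rep hD XA YA ∘ₗ hD.comul

theorem tact_expand (d : D) (s : Finset ℕ) (d1 d2 : ℕ → D)
    (hd : hD.comul d = ∑ i ∈ s, d1 i ⊗ₜ[K] d2 i) (x : X) (y : Y) :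
    tact hD XA YA d (x ⊗ₜ[K] y) = ∑ i ∈ s, XA.act (d1 i) x ⊗ₜ[K] YA.act (d2 i) y := by
  simp [tact, hd, map_sum, LinearMap.sum_apply]

noncomputable def tcoact : X ⊗[K] Y →ₗ[K] D ⊗[K] (X ⊗[K] Y) :=
  M2 K D X Y ∘ₗ TensorProduct.map XA.coact YA.coact

theorem tcoact_tmul (x : X) (y : Y) :
    tcoact hD XA YA (x ⊗ₜ[K] y) = M2 K D X Y (XA.coact x ⊗ₜ[K] YA.coact y) := by
  simp [tcoact]

theorem tcoact_expand (x : X) (y : Y) (s t : Finset ℕ)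
    (xc : ℕ → D) (x0 : ℕ → X) (yc : ℕ → D) (y0 : ℕ → Y)
    (hx : XA.coact x = ∑ i ∈ s, xc i ⊗ₜ[K] x0 i)
    (hy : YA.coact y = ∑ j ∈ t, yc j ⊗ₜ[K] y0 j) :
    tcoact hD XA YA (x ⊗ₜ[K] y)
      = ∑ i ∈ s, ∑ j ∈ t, (xc i * yc j) ⊗ₜ[K] (x0 i ⊗ₜ[K] y0 j) := by
  rw [tcoact_tmul, hx, hy]
  rw [TensorProduct.sum_tmul]
  rw [map_sum]
  refine Finset.sum_congr rfl (fun i _ => ?_)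
  rw [TensorProduct.tmul_sum, map_sum]
  exact Finset.sum_congr rfl (fun j _ => M2_tmul _ _ _ _ _ _)

theorem coassoc_exp (d : D) (s : Finset ℕ) (d1 d2 : ℕ → D)
    (hd : hD.comul d = ∑ i ∈ s, d1 i ⊗ₜ[K] d2 i)
    (p : ℕ → Finset ℕ) (a b : ℕ → ℕ → D)
    (h1 : ∀ i ∈ s, hD.comul (d1 i) = ∑ j ∈ p i, a i j ⊗ₜ[K] b i j)
    (q : ℕ → Finset ℕ) (e f : ℕ → ℕ → D)
    (h2 : ∀ i ∈ s, hD.comul (d2 i) = ∑ k ∈ q i, e i k ⊗ₜ[K] f i k) :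
    ∑ i ∈ s, ∑ j ∈ p i, a i j ⊗ₜ[K] (b i j ⊗ₜ[K] d2 i)
      = ∑ i ∈ s, ∑ k ∈ q i, d1 i ⊗ₜ[K] (e i k ⊗ₜ[K] f i k) := by
  have H := hD.coassoc d
  rw [hd] at H
  simp only [map_sum] at H
  have hL : ∀ i ∈ s,
      (TensorProduct.assoc K D D D) (LinearMap.rTensor D hD.comul (d1 i ⊗ₜ[K] d2 i))
        = ∑ j ∈ p i, a i j ⊗ₜ[K] (b i j ⊗ₜ[K] d2 i) := fun i hi => by
    rw [LinearMap.rTensor_tmul, h1 i hi, TensorProduct.sum_tmul, map_sum]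
    exact Finset.sum_congr rfl fun j _ => by simp
  have hR : ∀ i ∈ s,
      LinearMap.lTensor D hD.comul (d1 i ⊗ₜ[K] d2 i)
        = ∑ k ∈ q i, d1 i ⊗ₜ[K] (e i k ⊗ₜ[K] f i k) := fun i hi => by
    rw [LinearMap.lTensor_tmul, h2 i hi, TensorProduct.tmul_sum]
  rw [Finset.sum_congr rfl hL, Finset.sum_congr rfl hR] at H
  exact H

theorem comodule_coassoc_exp {Z : Type} [NonUnitalRing Z] [Module K Z]
    [SMulCommClass K Z Z] [IsScalarTower K Z Z]
    (ZA : YetterDrinfeldModuleAlgebra K D Z hD)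
    (z : Z) (s : Finset ℕ) (c : ℕ → D) (z0 : ℕ → Z)
    (hz : ZA.coact z = ∑ i ∈ s, c i ⊗ₜ[K] z0 i)
    (p : ℕ → Finset ℕ) (c1 c2 : ℕ → ℕ → D)
    (h1 : ∀ i ∈ s, hD.comul (c i) = ∑ j ∈ p i, c1 i j ⊗ₜ[K] c2 i j)
    (q : ℕ → Finset ℕ) (h : ℕ → ℕ → D) (g : ℕ → ℕ → Z)
    (h2 : ∀ i ∈ s, ZA.coact (z0 i) = ∑ t ∈ q i, h i t ⊗ₜ[K] g i t) :
    ∑ i ∈ s, ∑ j ∈ p i, c1 i j ⊗ₜ[K] (c2 i j ⊗ₜ[K] z0 i)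
      = ∑ i ∈ s, ∑ t ∈ q i, c i ⊗ₜ[K] (h i t ⊗ₜ[K] g i t) := by
  have H := ZA.coact_coassoc z
  rw [hz] at H
  simp only [map_sum] at H
  have hL : ∀ i ∈ s,
      (TensorProduct.assoc K D D Z) (LinearMap.rTensor Z hD.comul (c i ⊗ₜ[K] z0 i))
        = ∑ j ∈ p i, c1 i j ⊗ₜ[K] (c2 i j ⊗ₜ[K] z0 i) := fun i hi => by
    rw [LinearMap.rTensor_tmul, h1 i hi, TensorProduct.sum_tmul, map_sum]
    exact Finset.sum_congr rfl fun j _ => by simp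
  have hR : ∀ i ∈ s,
      LinearMap.lTensor D ZA.coact (c i ⊗ₜ[K] z0 i)
        = ∑ t ∈ q i, c i ⊗ₜ[K] (h i t ⊗ₜ[K] g i t) := fun i hi => by
    rw [LinearMap.lTensor_tmul, h2 i hi, TensorProduct.tmul_sum]
  rw [Finset.sum_congr rfl hL, Finset.sum_congr rfl hR] at H
  exact H

theorem yd_free {Z : Type} [NonUnitalRing Z] [Module K Z]
    [SMulCommClass K Z Z] [IsScalarTower K Z Z]
    (ZA : YetterDrinfeldModuleAlgebra K D Z hD)
    (d : D) (s : Finset ℕ) (d1 d2 : ℕ → D)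
    (hd : hD.comul d = ∑ i ∈ s, d1 i ⊗ₜ[K] d2 i) (z : Z) :
    ∑ i ∈ s, LinearMap.rTensor Z (LinearMap.mulRight K (d2 i)) (ZA.coact (ZA.act (d1 i) z))
      = ∑ i ∈ s, TensorProduct.map (LinearMap.mulLeft K (d1 i)) (ZA.act (d2 i))
          (ZA.coact z) := by
  rw [← sub_eq_zero]
  refine BPAux.cancel_right hD.mul_nondeg_left _ (fun d' => ?_)
  rw [map_sub, map_sum, map_sum]
  have H := ZA.yd d s d1 d2 hd d' z
  have e1 : ∀ i, LinearMap.rTensor Z (LinearMap.mulRight K d') ∘ₗ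
      LinearMap.rTensor Z (LinearMap.mulRight K (d2 i))
      = LinearMap.rTensor Z (LinearMap.mulRight K (d2 i * d')) := by
    intro i
    apply TensorProduct.ext'
    intro a z
    simp [mul_assoc]
  have e2 : ∀ i, LinearMap.rTensor Z (LinearMap.mulRight K d') ∘ₗ
      TensorProduct.map (LinearMap.mulLeft K (d1 i)) (ZA.act (d2 i))
      = TensorProduct.map (LinearMap.mulLeft K (d1 i) ∘ₗ LinearMap.mulRight K d')
          (ZA.act (d2 i)) := by
    intro i
    apply TensorProduct.ext'
    intro a z
    simp [mul_assoc]
  have HL : ∀ i ∈ s, LinearMap.rTensor Z (LinearMap.mulRight K d')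
      (LinearMap.rTensor Z (LinearMap.mulRight K (d2 i)) (ZA.coact (ZA.act (d1 i) z)))
      = LinearMap.rTensor Z (LinearMap.mulRight K (d2 i * d')) (ZA.coact (ZA.act (d1 i) z)) :=
    fun i _ => by rw [← LinearMap.comp_apply, e1]
  have HR : ∀ i ∈ s, LinearMap.rTensor Z (LinearMap.mulRight K d')
      (TensorProduct.map (LinearMap.mulLeft K (d1 i)) (ZA.act (d2 i)) (ZA.coact z))
      = TensorProduct.map (LinearMap.mulLeft K (d1 i) ∘ₗ LinearMap.mulRight K d')
          (ZA.act (d2 i)) (ZA.coact z) :=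
    fun i _ => by rw [← LinearMap.comp_apply, e2]
  rw [Finset.sum_congr rfl HL, Finset.sum_congr rfl HR, H, sub_self]

theorem diamond (d : D) (s : Finset ℕ) (d1 d2 : ℕ → D)
    (hd : hD.comul d = ∑ i ∈ s, d1 i ⊗ₜ[K] d2 i)
    (p : ℕ → Finset ℕ) (a b : ℕ → ℕ → D)
    (h1 : ∀ i ∈ s, hD.comul (d1 i) = ∑ j ∈ p i, a i j ⊗ₜ[K] b i j)
    (q : ℕ → Finset ℕ) (e f : ℕ → ℕ → D)
    (h2 : ∀ i ∈ s, hD.comul (d2 i) = ∑ k ∈ q i, e i k ⊗ₜ[K] f i k)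
    (r : ℕ → ℕ → Finset ℕ) (β1 β2 : ℕ → ℕ → ℕ → D)
    (h3 : ∀ i ∈ s, ∀ j ∈ p i, hD.comul (b i j) = ∑ k ∈ r i j, β1 i j k ⊗ₜ[K] β2 i j k) :
    ∑ i ∈ s, ∑ j ∈ p i, ∑ k ∈ q i, a i j ⊗ₜ[K] (b i j ⊗ₜ[K] (e i k ⊗ₜ[K] f i k))
      = ∑ i ∈ s, ∑ j ∈ p i, ∑ k ∈ r i j,
          a i j ⊗ₜ[K] (β1 i j k ⊗ₜ[K] (β2 i j k ⊗ₜ[K] d2 i)) := by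
  have star := coassoc_exp hD d s d1 d2 hd p a b h1 q e f h2
  set L : D ⊗[K] (D ⊗[K] D) →ₗ[K] D ⊗[K] (D ⊗[K] (D ⊗[K] D)) :=
    LinearMap.lTensor D (LinearMap.lTensor D hD.comul) with hL
  set M : D ⊗[K] (D ⊗[K] D) →ₗ[K] D ⊗[K] (D ⊗[K] (D ⊗[K] D)) :=
    LinearMap.lTensor D ((TensorProduct.assoc K D D D).toLinearMap ∘ₗ
      LinearMap.rTensor D hD.comul) with hM
  have eL1 : L (∑ i ∈ s, ∑ j ∈ p i, a i j ⊗ₜ[K] (b i j ⊗ₜ[K] d2 i))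
      = ∑ i ∈ s, ∑ j ∈ p i, ∑ k ∈ q i, a i j ⊗ₜ[K] (b i j ⊗ₜ[K] (e i k ⊗ₜ[K] f i k)) := by
    rw [map_sum]
    refine Finset.sum_congr rfl fun i hi => ?_
    rw [map_sum]
    refine Finset.sum_congr rfl fun j hj => ?_
    rw [hL, LinearMap.lTensor_tmul, LinearMap.lTensor_tmul, h2 i hi,
      TensorProduct.tmul_sum, TensorProduct.tmul_sum]
  have eM1 : M (∑ i ∈ s, ∑ j ∈ p i, a i j ⊗ₜ[K] (b i j ⊗ₜ[K] d2 i))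
      = ∑ i ∈ s, ∑ j ∈ p i, ∑ k ∈ r i j,
          a i j ⊗ₜ[K] (β1 i j k ⊗ₜ[K] (β2 i j k ⊗ₜ[K] d2 i)) := by
    rw [map_sum]
    refine Finset.sum_congr rfl fun i hi => ?_
    rw [map_sum]
    refine Finset.sum_congr rfl fun j hj => ?_
    rw [hM, LinearMap.lTensor_tmul, LinearMap.comp_apply, LinearMap.rTensor_tmul,
      h3 i hi j hj, TensorProduct.sum_tmul, map_sum, TensorProduct.tmul_sum]
    exact Finset.sum_congr rfl fun k hk => by
      rw [LinearEquiv.coe_coe, TensorProduct.assoc_tmul]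
  have eL2 : L (∑ i ∈ s, ∑ k ∈ q i, d1 i ⊗ₜ[K] (e i k ⊗ₜ[K] f i k))
      = ∑ i ∈ s, ∑ k ∈ q i, d1 i ⊗ₜ[K] (e i k ⊗ₜ[K] hD.comul (f i k)) := by
    rw [map_sum]
    refine Finset.sum_congr rfl fun i hi => ?_
    rw [map_sum]
    refine Finset.sum_congr rfl fun k hk => ?_
    rw [hL, LinearMap.lTensor_tmul, LinearMap.lTensor_tmul]
  have eM2 : M (∑ i ∈ s, ∑ k ∈ q i, d1 i ⊗ₜ[K] (e i k ⊗ₜ[K] f i k))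
      = ∑ i ∈ s, ∑ k ∈ q i, d1 i ⊗ₜ[K] (e i k ⊗ₜ[K] hD.comul (f i k)) := by
    rw [map_sum]
    refine Finset.sum_congr rfl fun i hi => ?_
    have coi := hD.coassoc (d2 i)
    rw [h2 i hi] at coi
    simp only [map_sum] at coi
    rw [map_sum]
    have e3 : ∀ k ∈ q i, M (d1 i ⊗ₜ[K] (e i k ⊗ₜ[K] f i k))
        = d1 i ⊗ₜ[K] ((TensorProduct.assoc K D D D)
            (LinearMap.rTensor D hD.comul (e i k ⊗ₜ[K] f i k))) := fun k _ => by
      rw [hM, LinearMap.lTensor_tmul, LinearMap.comp_apply, LinearEquiv.coe_coe]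
    rw [Finset.sum_congr rfl e3, ← TensorProduct.tmul_sum, coi, TensorProduct.tmul_sum]
    exact Finset.sum_congr rfl fun k _ => by rw [LinearMap.lTensor_tmul]
  calc ∑ i ∈ s, ∑ j ∈ p i, ∑ k ∈ q i, a i j ⊗ₜ[K] (b i j ⊗ₜ[K] (e i k ⊗ₜ[K] f i k))
      = L (∑ i ∈ s, ∑ j ∈ p i, a i j ⊗ₜ[K] (b i j ⊗ₜ[K] d2 i)) := eL1.symm
    _ = L (∑ i ∈ s, ∑ k ∈ q i, d1 i ⊗ₜ[K] (e i k ⊗ₜ[K] f i k)) := by rw [star]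
    _ = M (∑ i ∈ s, ∑ k ∈ q i, d1 i ⊗ₜ[K] (e i k ⊗ₜ[K] f i k)) := by rw [eL2, eM2]
    _ = M (∑ i ∈ s, ∑ j ∈ p i, a i j ⊗ₜ[K] (b i j ⊗ₜ[K] d2 i)) := by rw [star]
    _ = _ := eM1

theorem rep_mul (z w : D ⊗[K] D) :
    rep hD XA YA (z * w) = rep hD XA YA z ∘ₗ rep hD XA YA w := by
  induction z with
  | zero => simp
  | add u v hu hv => simp [add_mul, hu, hv, LinearMap.add_comp]
  | tmul a b =>
    induction w with
    | zero => simp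
    | add u v hu hv => simp [mul_add, hu, hv, LinearMap.comp_add]
    | tmul c e =>
      rw [Algebra.TensorProduct.tmul_mul_tmul]
      apply TensorProduct.ext'
      intro u v
      simp [XA.act_act, YA.act_act]

theorem tact_mul (d d' : D) (u : X ⊗[K] Y) :
    tact hD XA YA (d * d') u = tact hD XA YA d (tact hD XA YA d' u) := by
  have : tact hD XA YA (d * d') = tact hD XA YA d ∘ₗ tact hD XA YA d' := by
    rw [tact, LinearMap.comp_apply, hD.comul_mul, rep_mul]; rfl
  rw [this]; rfl

theorem tact_unital :
    Submodule.span K {v : X ⊗[K] Y | ∃ (d : D) (u : X ⊗[K] Y), tact hD XA YA d u = v} = ⊤ := by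
  rw [eq_top_iff]
  set P := Submodule.span K {v : X ⊗[K] Y | ∃ (d : D) (u : X ⊗[K] Y), tact hD XA YA d u = v}
    with hP
  have mem_tact : ∀ (d : D) (u : X ⊗[K] Y), tact hD XA YA d u ∈ P :=
    fun d u => Submodule.subset_span ⟨d, u, rfl⟩
  have key : ∀ (d e : D) (x : X) (y : Y), XA.act d x ⊗ₜ[K] YA.act e y ∈ P := by
    intro d e x y
    obtain ⟨w, hw⟩ := hD.T1_bijective.2 (d ⊗ₜ[K] e)
    have claim : ∀ w : D ⊗[K] D, rep hD XA YA
        (LinearMap.lTensor D (LinearMap.mul' K D)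
          ((TensorProduct.assoc K D D D) (LinearMap.rTensor D hD.comul w))) (x ⊗ₜ[K] y)
          ∈ P := by
      intro w
      induction w with
      | zero => simp only [map_zero, LinearMap.zero_apply]; exact P.zero_mem
      | add u v hu hv =>
        simp only [map_add, LinearMap.add_apply]; exact P.add_mem hu hv
      | tmul aa bb =>
        obtain ⟨sa, a1, a2, ha⟩ := BPAux.exists_rep (hD.comul aa)
        have e1 : LinearMap.lTensor D (LinearMap.mul' K D)
            ((TensorProduct.assoc K D D D) (LinearMap.rTensor D hD.comul (aa ⊗ₜ[K] bb)))
            = ∑ i ∈ sa, a1 i ⊗ₜ[K] (a2 i * bb) := by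
          rw [LinearMap.rTensor_tmul, ha, TensorProduct.sum_tmul]
          simp only [map_sum]
          exact Finset.sum_congr rfl fun i _ => by simp
        rw [e1, map_sum, LinearMap.sum_apply]
        have e2 : ∑ i ∈ sa, rep hD XA YA (a1 i ⊗ₜ[K] (a2 i * bb)) (x ⊗ₜ[K] y)
            = tact hD XA YA aa (x ⊗ₜ[K] YA.act bb y) := by
          rw [tact_expand hD XA YA aa sa a1 a2 ha]
          exact Finset.sum_congr rfl fun i _ => by simp [YA.act_act]
        rw [e2]
        exact mem_tact _ _
    have hc := claim w
    have hw2 : (LinearMap.lTensor D (LinearMap.mul' K D))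
        ((TensorProduct.assoc K D D D) ((LinearMap.rTensor D hD.comul) w)) = d ⊗ₜ[K] e := hw
    rw [hw2] at hc
    simpa using hc
  intro u hu
  clear hu
  induction u with
  | zero => exact P.zero_mem
  | add a b ha hb => exact P.add_mem ha hb
  | tmul x y =>
    have hx : x ∈ Submodule.span K {w : X | ∃ (d : D) (x' : X), XA.act d x' = w} := by
      rw [XA.act_unital]; trivial
    refine Submodule.span_induction (p := fun w _ => w ⊗ₜ[K] y ∈ P) ?_ ?_ ?_ ?_ hx
    · rintro w ⟨d, x', rfl⟩
      have hy : y ∈ Submodule.span K {w : Y | ∃ (d : D) (y' : Y), YA.act d y' = w} := by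
        rw [YA.act_unital]; trivial
      refine Submodule.span_induction (p := fun z _ => XA.act d x' ⊗ₜ[K] z ∈ P) ?_ ?_ ?_ ?_ hy
      · rintro z ⟨e, y', rfl⟩; exact key d e x' y'
      · rw [TensorProduct.tmul_zero]; exact P.zero_mem
      · intro u v _ _ pu pv
        rw [TensorProduct.tmul_add]; exact P.add_mem pu pv
      · intro c u _ pu
        rw [TensorProduct.tmul_smul]; exact P.smul_mem c pu
    · rw [TensorProduct.zero_tmul]; exact P.zero_mem
    · intro u v _ _ pu pv
      rw [TensorProduct.add_tmul]; exact P.add_mem pu pv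
    · intro c u _ pu
      rw [← TensorProduct.smul_tmul']; exact P.smul_mem c pu

theorem tcoact_counit (u : X ⊗[K] Y) :
    (TensorProduct.lid K (X ⊗[K] Y))
      (LinearMap.rTensor (X ⊗[K] Y) hD.counit (tcoact hD XA YA u)) = u := by
  induction u with
  | zero => simp
  | add a b ha hb => rw [map_add, map_add, map_add, ha, hb]
  | tmul x y =>
    obtain ⟨sx, xc, x0, hx⟩ := BPAux.exists_rep (XA.coact x)
    obtain ⟨sy, yc, y0, hy⟩ := BPAux.exists_rep (YA.coact y)
    rw [tcoact_expand hD XA YA x y sx sy xc x0 yc y0 hx hy]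
    have cx : ∑ i ∈ sx, hD.counit (xc i) • x0 i = x := by
      have h := XA.coact_counit x
      rw [hx] at h
      simp only [map_sum] at h
      simpa using h
    have cy : ∑ j ∈ sy, hD.counit (yc j) • y0 j = y := by
      have h := YA.coact_counit y
      rw [hy] at h
      simp only [map_sum] at h
      simpa using h
    simp only [map_sum]
    calc ∑ i ∈ sx, ∑ j ∈ sy, (TensorProduct.lid K (X ⊗[K] Y))
          (LinearMap.rTensor (X ⊗[K] Y) hD.counit
            ((xc i * yc j) ⊗ₜ[K] (x0 i ⊗ₜ[K] y0 j)))
        = ∑ i ∈ sx, ∑ j ∈ sy,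
            (hD.counit (xc i) • x0 i) ⊗ₜ[K] (hD.counit (yc j) • y0 j) := by
          refine Finset.sum_congr rfl fun i _ => Finset.sum_congr rfl fun j _ => ?_
          rw [LinearMap.rTensor_tmul, TensorProduct.lid_tmul, hD.counit_mul, mul_comm,
            mul_smul, TensorProduct.smul_tmul', ← TensorProduct.tmul_smul]
      _ = (∑ i ∈ sx, hD.counit (xc i) • x0 i) ⊗ₜ[K] (∑ j ∈ sy, hD.counit (yc j) • y0 j) := by
          rw [TensorProduct.sum_tmul]
          exact Finset.sum_congr rfl fun i _ => (TensorProduct.tmul_sum _ _ _).symm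
      _ = x ⊗ₜ[K] y := by rw [cx, cy]

theorem sum_mul_sum_tmul {V : Type} [NonUnitalRing V] [Module K V] [SMulCommClass K V V]
    [IsScalarTower K V V] (p q : Finset ℕ) (a : ℕ → D) (b : ℕ → V) (c : ℕ → D) (e : ℕ → V) :
    (∑ j ∈ p, a j ⊗ₜ[K] b j) * (∑ k ∈ q, c k ⊗ₜ[K] e k)
      = ∑ j ∈ p, ∑ k ∈ q, (a j * c k) ⊗ₜ[K] (b j * e k) := by
  rw [Finset.sum_mul_sum]
  exact Finset.sum_congr rfl fun j _ => Finset.sum_congr rfl fun k _ =>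
    Algebra.TensorProduct.tmul_mul_tmul _ _ _ _

noncomputable def GG : (D ⊗[K] (D ⊗[K] X)) ⊗[K] (D ⊗[K] (D ⊗[K] Y))
    →ₗ[K] D ⊗[K] (D ⊗[K] (X ⊗[K] Y)) :=
  LinearMap.lTensor D (M2 K D X Y) ∘ₗ M2 K D (D ⊗[K] X) (D ⊗[K] Y)

@[simp] theorem GG_tmul (d e f g : D) (x : X) (y : Y) :
    GG (K := K) ((d ⊗ₜ[K] (e ⊗ₜ[K] x)) ⊗ₜ[K] (f ⊗ₜ[K] (g ⊗ₜ[K] y)))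
      = (d * f) ⊗ₜ[K] ((e * g) ⊗ₜ[K] (x ⊗ₜ[K] y)) := by
  simp [GG]

theorem tcoact_coassoc (u : X ⊗[K] Y) :
    (TensorProduct.assoc K D D (X ⊗[K] Y))
        (LinearMap.rTensor (X ⊗[K] Y) hD.comul (tcoact hD XA YA u))
      = LinearMap.lTensor D (tcoact hD XA YA) (tcoact hD XA YA u) := by
  induction u with
  | zero => simp only [map_zero]
  | add a b ha hb => simp only [map_add, ha, hb]
  | tmul x y =>
    obtain ⟨sx, xc, x0, hx⟩ := BPAux.exists_rep (XA.coact x)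
    obtain ⟨sy, yc, y0, hy⟩ := BPAux.exists_rep (YA.coact y)
    choose px α1 α2 hα using fun i => BPAux.exists_rep (hD.comul (xc i))
    choose qx hX gX hgx using fun i => BPAux.exists_rep (XA.coact (x0 i))
    choose py γ1 γ2 hγ using fun i => BPAux.exists_rep (hD.comul (yc i))
    choose qy hY gY hgy using fun i => BPAux.exists_rep (YA.coact (y0 i))
    have cX := comodule_coassoc_exp hD XA x sx xc x0 hx px α1 α2 (fun i _ => hα i)
      qx hX gX (fun i _ => hgx i)
    have cY := comodule_coassoc_exp hD YA y sy yc y0 hy py γ1 γ2 (fun i _ => hγ i)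
      qy hY gY (fun i _ => hgy i)
    have LHS_eq : (TensorProduct.assoc K D D (X ⊗[K] Y))
        (LinearMap.rTensor (X ⊗[K] Y) hD.comul (tcoact hD XA YA (x ⊗ₜ[K] y)))
        = ∑ i ∈ sx, ∑ i' ∈ sy, ∑ j ∈ px i, ∑ k ∈ py i',
            (α1 i j * γ1 i' k) ⊗ₜ[K]
              ((α2 i j * γ2 i' k) ⊗ₜ[K] (x0 i ⊗ₜ[K] y0 i')) := by
      rw [tcoact_expand hD XA YA x y sx sy xc x0 yc y0 hx hy]
      simp only [map_sum]
      refine Finset.sum_congr rfl fun i _ => Finset.sum_congr rfl fun i' _ => ?_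
      rw [LinearMap.rTensor_tmul, hD.comul_mul, hα i, hγ i',
        sum_mul_sum_tmul, TensorProduct.sum_tmul]
      simp only [map_sum]
      refine Finset.sum_congr rfl fun j _ => ?_
      rw [TensorProduct.sum_tmul]
      simp only [map_sum]
      exact Finset.sum_congr rfl fun k _ => by rw [TensorProduct.assoc_tmul]
    have GGL_eq : GG (K := K)
        ((∑ i ∈ sx, ∑ j ∈ px i, α1 i j ⊗ₜ[K] (α2 i j ⊗ₜ[K] x0 i)) ⊗ₜ[K]
          (∑ i' ∈ sy, ∑ k ∈ py i', γ1 i' k ⊗ₜ[K] (γ2 i' k ⊗ₜ[K] y0 i')))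
        = ∑ i ∈ sx, ∑ j ∈ px i, ∑ i' ∈ sy, ∑ k ∈ py i',
            (α1 i j * γ1 i' k) ⊗ₜ[K]
              ((α2 i j * γ2 i' k) ⊗ₜ[K] (x0 i ⊗ₜ[K] y0 i')) := by
      rw [TensorProduct.sum_tmul]
      simp only [map_sum]
      refine Finset.sum_congr rfl fun i _ => ?_
      rw [TensorProduct.sum_tmul]
      simp only [map_sum]
      refine Finset.sum_congr rfl fun j _ => ?_
      rw [TensorProduct.tmul_sum]
      simp only [map_sum]
      refine Finset.sum_congr rfl fun i' _ => ?_
      rw [TensorProduct.tmul_sum]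
      simp only [map_sum]
      exact Finset.sum_congr rfl fun k _ => GG_tmul _ _ _ _ _ _
    have GGR_eq : GG (K := K)
        ((∑ i ∈ sx, ∑ t ∈ qx i, xc i ⊗ₜ[K] (hX i t ⊗ₜ[K] gX i t)) ⊗ₜ[K]
          (∑ i' ∈ sy, ∑ t' ∈ qy i', yc i' ⊗ₜ[K] (hY i' t' ⊗ₜ[K] gY i' t')))
        = ∑ i ∈ sx, ∑ t ∈ qx i, ∑ i' ∈ sy, ∑ t' ∈ qy i',
            (xc i * yc i') ⊗ₜ[K]
              ((hX i t * hY i' t') ⊗ₜ[K] (gX i t ⊗ₜ[K] gY i' t')) := by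
      rw [TensorProduct.sum_tmul]
      simp only [map_sum]
      refine Finset.sum_congr rfl fun i _ => ?_
      rw [TensorProduct.sum_tmul]
      simp only [map_sum]
      refine Finset.sum_congr rfl fun t _ => ?_
      rw [TensorProduct.tmul_sum]
      simp only [map_sum]
      refine Finset.sum_congr rfl fun i' _ => ?_
      rw [TensorProduct.tmul_sum]
      simp only [map_sum]
      exact Finset.sum_congr rfl fun t' _ => GG_tmul _ _ _ _ _ _
    have RHS_eq : LinearMap.lTensor D (tcoact hD XA YA) (tcoact hD XA YA (x ⊗ₜ[K] y))
        = ∑ i ∈ sx, ∑ i' ∈ sy, ∑ t ∈ qx i, ∑ t' ∈ qy i',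
            (xc i * yc i') ⊗ₜ[K]
              ((hX i t * hY i' t') ⊗ₜ[K] (gX i t ⊗ₜ[K] gY i' t')) := by
      rw [tcoact_expand hD XA YA x y sx sy xc x0 yc y0 hx hy]
      simp only [map_sum]
      refine Finset.sum_congr rfl fun i _ => Finset.sum_congr rfl fun i' _ => ?_
      rw [LinearMap.lTensor_tmul,
        tcoact_expand hD XA YA (x0 i) (y0 i') (qx i) (qy i') (hX i) (gX i) (hY i') (gY i')
          (hgx i) (hgy i'), TensorProduct.tmul_sum]
      exact Finset.sum_congr rfl fun t _ => (TensorProduct.tmul_sum _ _ _)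
    rw [LHS_eq, RHS_eq]
    have comm1 : ∑ i ∈ sx, ∑ i' ∈ sy, ∑ j ∈ px i, ∑ k ∈ py i',
            (α1 i j * γ1 i' k) ⊗ₜ[K]
              ((α2 i j * γ2 i' k) ⊗ₜ[K] (x0 i ⊗ₜ[K] y0 i'))
        = ∑ i ∈ sx, ∑ j ∈ px i, ∑ i' ∈ sy, ∑ k ∈ py i',
            (α1 i j * γ1 i' k) ⊗ₜ[K]
              ((α2 i j * γ2 i' k) ⊗ₜ[K] (x0 i ⊗ₜ[K] y0 i')) :=
      Finset.sum_congr rfl fun i _ => Finset.sum_comm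
    have comm2 : ∑ i ∈ sx, ∑ i' ∈ sy, ∑ t ∈ qx i, ∑ t' ∈ qy i',
            (xc i * yc i') ⊗ₜ[K]
              ((hX i t * hY i' t') ⊗ₜ[K] (gX i t ⊗ₜ[K] gY i' t'))
        = ∑ i ∈ sx, ∑ t ∈ qx i, ∑ i' ∈ sy, ∑ t' ∈ qy i',
            (xc i * yc i') ⊗ₜ[K]
              ((hX i t * hY i' t') ⊗ₜ[K] (gX i t ⊗ₜ[K] gY i' t')) :=
      Finset.sum_congr rfl fun i _ => Finset.sum_comm
    rw [comm1, comm2, ← GGL_eq, ← GGR_eq, cX, cY]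

theorem bmul_assoc (u v w : X ⊗[K] Y) :
    bmul hD XA YA (bmul hD XA YA u v) w = bmul hD XA YA u (bmul hD XA YA v w) := by
  induction u with
  | zero => simp only [map_zero, LinearMap.zero_apply, map_zero]
  | add a b ha hb => simp only [map_add, LinearMap.add_apply, ha, hb]
  | tmul x y =>
  induction v with
  | zero => simp only [map_zero, LinearMap.zero_apply, map_zero]
  | add a b ha hb => simp only [map_add, LinearMap.add_apply, ha, hb]
  | tmul x' y' =>
  induction w with
  | zero => simp only [map_zero]
  | add a b ha hb => simp only [map_add, ha, hb]
  | tmul x'' y'' =>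
  obtain ⟨s, c, y0, hy⟩ := BPAux.exists_rep (YA.coact y)
  obtain ⟨t, c', w, hy'⟩ := BPAux.exists_rep (YA.coact y')
  choose p c1 c2 hc using fun k => BPAux.exists_rep (hD.comul (c k))
  choose q e z hz using fun k => BPAux.exists_rep (YA.coact (y0 k))
  have cY := comodule_coassoc_exp hD YA y s c y0 hy p c1 c2 (fun k _ => hc k)
    q e z (fun k _ => hz k)
  -- the transport maps
  set F : ℕ → (D ⊗[K] (D ⊗[K] Y)) →ₗ[K] X ⊗[K] Y := fun l =>
    LinearMap.rTensor Y (LinearMap.mul' K X) ∘ₗ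
      (TensorProduct.assoc K X X Y).symm.toLinearMap ∘ₗ
      TensorProduct.map (LinearMap.mulLeft K x ∘ₗ XA.act.flip x')
        (TensorProduct.map (XA.act.flip x'' ∘ₗ LinearMap.mulRight K (c' l))
          (LinearMap.mulRight K y'' ∘ₗ LinearMap.mulRight K (w l))) with hFdef
  have hF : ∀ (l : ℕ) (d e : D) (zz : Y),
      F l (d ⊗ₜ[K] (e ⊗ₜ[K] zz))
        = ((x * XA.act d x') * XA.act (e * c' l) x'') ⊗ₜ[K] ((zz * w l) * y'') := by
    intro l d e zz
    simp [hFdef, TensorProduct.assoc_symm_tmul]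
  -- LHS computation
  have step1 : bmul hD XA YA (bmul hD XA YA (x ⊗ₜ[K] y) (x' ⊗ₜ[K] y')) (x'' ⊗ₜ[K] y'')
      = ∑ k ∈ s, ∑ m ∈ q k, ∑ l ∈ t,
          ((x * XA.act (c k) x') * XA.act (e k m * c' l) x'')
            ⊗ₜ[K] ((z k m * w l) * y'') := by
    rw [bmul_expand hD XA YA x x' y y' s c y0 hy, map_sum, LinearMap.sum_apply]
    refine Finset.sum_congr rfl fun k _ => ?_
    have hcoact : YA.coact (y0 k * y')
        = ∑ m ∈ q k, ∑ l ∈ t, (e k m * c' l) ⊗ₜ[K] (z k m * w l) := by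
      rw [YA.coact_mul, hz k, hy', sum_mul_sum_tmul]
    rw [bmul_tmul, LinearMap.comp_apply, hcoact]
    simp only [map_sum, LinearMap.sum_apply]
    refine Finset.sum_congr rfl fun m _ => Finset.sum_congr rfl fun l _ => ?_
    rw [Phi_tmul, LinearMap.rTensor_tmul]
    simp
  have step2 : ∀ l ∈ t,
      F l (∑ k ∈ s, ∑ m ∈ q k, c k ⊗ₜ[K] (e k m ⊗ₜ[K] z k m))
        = ∑ k ∈ s, ∑ m ∈ q k,
            ((x * XA.act (c k) x') * XA.act (e k m * c' l) x'')
              ⊗ₜ[K] ((z k m * w l) * y'') := by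
    intro l _
    rw [map_sum]
    exact Finset.sum_congr rfl fun k _ => by
      rw [map_sum]; exact Finset.sum_congr rfl fun m _ => hF l _ _ _
  have step3 : ∀ l ∈ t,
      F l (∑ k ∈ s, ∑ i ∈ p k, c1 k i ⊗ₜ[K] (c2 k i ⊗ₜ[K] y0 k))
        = ∑ k ∈ s, ∑ i ∈ p k,
            ((x * XA.act (c1 k i) x') * XA.act (c2 k i * c' l) x'')
              ⊗ₜ[K] ((y0 k * w l) * y'') := by
    intro l _
    rw [map_sum]
    exact Finset.sum_congr rfl fun k _ => by
      rw [map_sum]; exact Finset.sum_congr rfl fun i _ => hF l _ _ _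
  -- RHS computation
  have rhs1 : bmul hD XA YA (x ⊗ₜ[K] y) (bmul hD XA YA (x' ⊗ₜ[K] y') (x'' ⊗ₜ[K] y''))
      = ∑ l ∈ t, ∑ k ∈ s, ∑ i ∈ p k,
          (x * (XA.act (c1 k i) x' * XA.act (c2 k i * c' l) x''))
            ⊗ₜ[K] (y0 k * (w l * y'')) := by
    rw [bmul_expand hD XA YA x' x'' y' y'' t c' w hy', map_sum]
    refine Finset.sum_congr rfl fun l _ => ?_
    rw [bmul_expand hD XA YA x _ y _ s c y0 hy]
    refine Finset.sum_congr rfl fun k _ => ?_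
    rw [XA.act_mul (c k) (p k) (c1 k) (c2 k) (hc k)]
    rw [Finset.mul_sum, TensorProduct.sum_tmul]
    refine Finset.sum_congr rfl fun i _ => ?_
    rw [XA.act_act]
  calc bmul hD XA YA (bmul hD XA YA (x ⊗ₜ[K] y) (x' ⊗ₜ[K] y')) (x'' ⊗ₜ[K] y'')
      = ∑ k ∈ s, ∑ m ∈ q k, ∑ l ∈ t,
          ((x * XA.act (c k) x') * XA.act (e k m * c' l) x'')
            ⊗ₜ[K] ((z k m * w l) * y'') := step1
    _ = ∑ l ∈ t, ∑ k ∈ s, ∑ m ∈ q k,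
          ((x * XA.act (c k) x') * XA.act (e k m * c' l) x'')
            ⊗ₜ[K] ((z k m * w l) * y'') := by
        rw [Finset.sum_congr rfl fun k (_ : k ∈ s) => Finset.sum_comm]
        exact Finset.sum_comm
    _ = ∑ l ∈ t, F l (∑ k ∈ s, ∑ m ∈ q k, c k ⊗ₜ[K] (e k m ⊗ₜ[K] z k m)) :=
        (Finset.sum_congr rfl fun l hl => (step2 l hl).symm)
    _ = ∑ l ∈ t, F l (∑ k ∈ s, ∑ i ∈ p k, c1 k i ⊗ₜ[K] (c2 k i ⊗ₜ[K] y0 k)) := by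
        rw [cY]
    _ = ∑ l ∈ t, ∑ k ∈ s, ∑ i ∈ p k,
          ((x * XA.act (c1 k i) x') * XA.act (c2 k i * c' l) x'')
            ⊗ₜ[K] ((y0 k * w l) * y'') := Finset.sum_congr rfl fun l hl => step3 l hl
    _ = ∑ l ∈ t, ∑ k ∈ s, ∑ i ∈ p k,
          (x * (XA.act (c1 k i) x' * XA.act (c2 k i * c' l) x''))
            ⊗ₜ[K] (y0 k * (w l * y'')) := by
        refine Finset.sum_congr rfl fun l _ => Finset.sum_congr rfl fun k _ =>
          Finset.sum_congr rfl fun i _ => ?_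
        rw [mul_assoc, mul_assoc]
    _ = bmul hD XA YA (x ⊗ₜ[K] y) (bmul hD XA YA (x' ⊗ₜ[K] y') (x'' ⊗ₜ[K] y'')) :=
        rhs1.symm

theorem rT_assoc_symm (x1 : X) (q : X ⊗[K] Y) :
    LinearMap.rTensor Y (LinearMap.mul' K X)
        ((TensorProduct.assoc K X X Y).symm (x1 ⊗ₜ[K] q))
      = LinearMap.rTensor Y ((LinearMap.mul K X) x1) q := by
  induction q with
  | zero => simp
  | add a b ha hb => rw [TensorProduct.tmul_add, map_add, map_add, ha, hb, map_add]
  | tmul u v => rw [TensorProduct.assoc_symm_tmul]; simp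

theorem Phi_shift (P : D ⊗[K] Y) (β : D) (x1 : X) (v : Y) :
    Phi hD XA P (XA.act β x1 ⊗ₜ[K] v)
      = Phi hD XA (LinearMap.rTensor Y (LinearMap.mulRight K β) P) (x1 ⊗ₜ[K] v) := by
  induction P with
  | zero => simp
  | add a b ha hb => simp only [map_add, LinearMap.add_apply, ha, hb]
  | tmul g z => rw [Phi_tmul, LinearMap.rTensor_tmul, Phi_tmul,
      LinearMap.mulRight_apply, ← XA.act_act]

theorem tact_bmul (d : D) (s : Finset ℕ) (d1 d2 : ℕ → D)
    (hd : hD.comul d = ∑ i ∈ s, d1 i ⊗ₜ[K] d2 i) (u v : X ⊗[K] Y) :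
    tact hD XA YA d (bmul hD XA YA u v)
      = ∑ i ∈ s, bmul hD XA YA (tact hD XA YA (d1 i) u) (tact hD XA YA (d2 i) v) := by
  induction u with
  | zero => simp only [map_zero, LinearMap.zero_apply, map_zero, Finset.sum_const_zero]
  | add a b ha hb =>
    simp only [map_add, LinearMap.add_apply, ha, hb, Finset.sum_add_distrib]
  | tmul x y =>
  induction v with
  | zero => simp only [map_zero, Finset.sum_const_zero]
  | add a b ha hb => simp only [map_add, ha, hb, Finset.sum_add_distrib]
  | tmul x' y' =>
  obtain ⟨sy, c, y0, hy⟩ := BPAux.exists_rep (YA.coact y)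
  choose p a b ha using fun i => BPAux.exists_rep (hD.comul (d1 i))
  choose q e f he using fun i => BPAux.exists_rep (hD.comul (d2 i))
  choose r β1 β2 hb using fun i j => BPAux.exists_rep (hD.comul (b i j))
  have dia := diamond hD d s d1 d2 hd p a b (fun i _ => ha i) q e f (fun i _ => he i)
    (fun i j => r i j) (fun i j => β1 i j) (fun i j => β2 i j)
    (fun i _ j _ => hb i j)
  -- transport maps
  set H2 : ℕ → (D ⊗[K] (D ⊗[K] (D ⊗[K] D))) →ₗ[K] X ⊗[K] Y := fun n =>
    TensorProduct.map (LinearMap.mul' K X) (LinearMap.mul' K Y) ∘ₗ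
      (TensorProduct.assoc K X X (Y ⊗[K] Y)).symm.toLinearMap ∘ₗ
      TensorProduct.map (XA.act.flip x)
        (TensorProduct.map (XA.act.flip x' ∘ₗ LinearMap.mulRight K (c n))
          (TensorProduct.map (YA.act.flip (y0 n)) (YA.act.flip y'))) with hH2def
  have hH2 : ∀ (n : ℕ) (w1 w2 w3 w4 : D),
      H2 n (w1 ⊗ₜ[K] (w2 ⊗ₜ[K] (w3 ⊗ₜ[K] w4)))
        = (XA.act w1 x * XA.act (w2 * c n) x')
            ⊗ₜ[K] (YA.act w3 (y0 n) * YA.act w4 y') := by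
    intro n w1 w2 w3 w4
    simp [hH2def, TensorProduct.assoc_symm_tmul]
  set H : (D ⊗[K] (D ⊗[K] (D ⊗[K] D))) →ₗ[K] X ⊗[K] Y :=
    LinearMap.rTensor Y (LinearMap.mul' K X) ∘ₗ
      (TensorProduct.assoc K X X Y).symm.toLinearMap ∘ₗ
      LinearMap.lTensor X (TensorProduct.lift (Phi hD XA)) ∘ₗ
      TensorProduct.map (XA.act.flip x)
        (TensorProduct.map (YA.coact ∘ₗ YA.act.flip y)
          (TensorProduct.map (XA.act.flip x') (YA.act.flip y'))) with hHdef
  have hH : ∀ (w1 w2 w3 w4 : D),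
      H (w1 ⊗ₜ[K] (w2 ⊗ₜ[K] (w3 ⊗ₜ[K] w4)))
        = bmul hD XA YA (XA.act w1 x ⊗ₜ[K] YA.act w2 y)
            (XA.act w3 x' ⊗ₜ[K] YA.act w4 y') := by
    intro w1 w2 w3 w4
    rw [hHdef]
    simp only [LinearMap.comp_apply, TensorProduct.map_tmul, LinearMap.lTensor_tmul,
      TensorProduct.lift.tmul, LinearMap.comp_apply, LinearMap.flip_apply,
      LinearEquiv.coe_coe]
    rw [rT_assoc_symm, bmul_tmul, LinearMap.comp_apply]
  -- LHS computation
  have lhs1 : tact hD XA YA d (bmul hD XA YA (x ⊗ₜ[K] y) (x' ⊗ₜ[K] y'))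
      = ∑ n ∈ sy, ∑ i ∈ s, ∑ j ∈ p i, ∑ k ∈ q i,
          (XA.act (a i j) x * XA.act (b i j * c n) x')
            ⊗ₜ[K] (YA.act (e i k) (y0 n) * YA.act (f i k) y') := by
    rw [bmul_expand hD XA YA x x' y y' sy c y0 hy, map_sum]
    refine Finset.sum_congr rfl fun n _ => ?_
    rw [tact_expand hD XA YA d s d1 d2 hd]
    refine Finset.sum_congr rfl fun i _ => ?_
    rw [XA.act_mul (d1 i) (p i) (a i) (b i) (ha i),
      YA.act_mul (d2 i) (q i) (e i) (f i) (he i), TensorProduct.sum_tmul]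
    refine Finset.sum_congr rfl fun j _ => ?_
    rw [TensorProduct.tmul_sum]
    refine Finset.sum_congr rfl fun k _ => ?_
    rw [XA.act_act]
  have lhs2 : ∀ n,
      H2 n (∑ i ∈ s, ∑ j ∈ p i, ∑ k ∈ q i,
          a i j ⊗ₜ[K] (b i j ⊗ₜ[K] (e i k ⊗ₜ[K] f i k)))
        = ∑ i ∈ s, ∑ j ∈ p i, ∑ k ∈ q i,
            (XA.act (a i j) x * XA.act (b i j * c n) x')
              ⊗ₜ[K] (YA.act (e i k) (y0 n) * YA.act (f i k) y') := by
    intro n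
    simp only [map_sum]
    exact Finset.sum_congr rfl fun i _ => Finset.sum_congr rfl fun j _ =>
      Finset.sum_congr rfl fun k _ => hH2 n _ _ _ _
  have lhs3 : ∀ n,
      H2 n (∑ i ∈ s, ∑ j ∈ p i, ∑ k ∈ r i j,
          a i j ⊗ₜ[K] (β1 i j k ⊗ₜ[K] (β2 i j k ⊗ₜ[K] d2 i)))
        = ∑ i ∈ s, ∑ j ∈ p i, ∑ k ∈ r i j,
            (XA.act (a i j) x * XA.act (β1 i j k * c n) x')
              ⊗ₜ[K] (YA.act (β2 i j k) (y0 n) * YA.act (d2 i) y') := by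
    intro n
    simp only [map_sum]
    exact Finset.sum_congr rfl fun i _ => Finset.sum_congr rfl fun j _ =>
      Finset.sum_congr rfl fun k _ => hH2 n _ _ _ _
  -- RHS computation
  have rhsA : ∑ i ∈ s, bmul hD XA YA (tact hD XA YA (d1 i) (x ⊗ₜ[K] y))
        (tact hD XA YA (d2 i) (x' ⊗ₜ[K] y'))
      = ∑ i ∈ s, ∑ j ∈ p i, ∑ k ∈ q i,
          bmul hD XA YA (XA.act (a i j) x ⊗ₜ[K] YA.act (b i j) y)
            (XA.act (e i k) x' ⊗ₜ[K] YA.act (f i k) y') := by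
    refine Finset.sum_congr rfl fun i _ => ?_
    rw [tact_expand hD XA YA (d1 i) (p i) (a i) (b i) (ha i),
      tact_expand hD XA YA (d2 i) (q i) (e i) (f i) (he i)]
    simp only [map_sum, LinearMap.sum_apply]
    first
    | rfl
    | exact Finset.sum_comm
  have rhsB : ∑ i ∈ s, ∑ j ∈ p i, ∑ k ∈ q i,
        bmul hD XA YA (XA.act (a i j) x ⊗ₜ[K] YA.act (b i j) y)
          (XA.act (e i k) x' ⊗ₜ[K] YA.act (f i k) y')
      = H (∑ i ∈ s, ∑ j ∈ p i, ∑ k ∈ q i,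
          a i j ⊗ₜ[K] (b i j ⊗ₜ[K] (e i k ⊗ₜ[K] f i k))) := by
    simp only [map_sum]
    exact Finset.sum_congr rfl fun i _ => Finset.sum_congr rfl fun j _ =>
      Finset.sum_congr rfl fun k _ => (hH _ _ _ _).symm
  have rhsD : H (∑ i ∈ s, ∑ j ∈ p i, ∑ k ∈ r i j,
        a i j ⊗ₜ[K] (β1 i j k ⊗ₜ[K] (β2 i j k ⊗ₜ[K] d2 i)))
      = ∑ i ∈ s, ∑ j ∈ p i, ∑ k ∈ r i j,
          bmul hD XA YA (XA.act (a i j) x ⊗ₜ[K] YA.act (β1 i j k) y)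
            (XA.act (β2 i j k) x' ⊗ₜ[K] YA.act (d2 i) y') := by
    simp only [map_sum]
    exact Finset.sum_congr rfl fun i _ => Finset.sum_congr rfl fun j _ =>
      Finset.sum_congr rfl fun k _ => hH _ _ _ _
  have rhsE : ∀ i ∈ s, ∀ j ∈ p i,
      ∑ k ∈ r i j, bmul hD XA YA (XA.act (a i j) x ⊗ₜ[K] YA.act (β1 i j k) y)
          (XA.act (β2 i j k) x' ⊗ₜ[K] YA.act (d2 i) y')
        = ∑ k ∈ r i j, ∑ n ∈ sy,
            (XA.act (a i j) x * XA.act (β1 i j k * c n) x')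
              ⊗ₜ[K] (YA.act (β2 i j k) (y0 n) * YA.act (d2 i) y') := by
    intro i _ j _
    set Λ : (D ⊗[K] Y) →ₗ[K] X ⊗[K] Y :=
      LinearMap.rTensor Y ((LinearMap.mul K X) (XA.act (a i j) x)) ∘ₗ
        (TensorProduct.lift (Phi hD XA)).comp
          ((TensorProduct.mk K (D ⊗[K] Y) (X ⊗[K] Y)).flip
            (x' ⊗ₜ[K] YA.act (d2 i) y')) with hΛdef
    have hΛ : ∀ P : D ⊗[K] Y, Λ P = LinearMap.rTensor Y ((LinearMap.mul K X)
        (XA.act (a i j) x)) (Phi hD XA P (x' ⊗ₜ[K] YA.act (d2 i) y')) := by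
      intro P
      rw [hΛdef]
      simp [TensorProduct.lift.tmul]
    have yfree := yd_free hD YA (b i j) (r i j) (β1 i j) (β2 i j) (hb i j) y
    calc ∑ k ∈ r i j, bmul hD XA YA (XA.act (a i j) x ⊗ₜ[K] YA.act (β1 i j k) y)
          (XA.act (β2 i j k) x' ⊗ₜ[K] YA.act (d2 i) y')
        = ∑ k ∈ r i j, Λ (LinearMap.rTensor Y (LinearMap.mulRight K (β2 i j k))
            (YA.coact (YA.act (β1 i j k) y))) := by
          refine Finset.sum_congr rfl fun k _ => ?_
          rw [bmul_tmul, LinearMap.comp_apply, Phi_shift, hΛ]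
      _ = Λ (∑ k ∈ r i j, LinearMap.rTensor Y (LinearMap.mulRight K (β2 i j k))
            (YA.coact (YA.act (β1 i j k) y))) := (map_sum _ _ _).symm
      _ = Λ (∑ k ∈ r i j, TensorProduct.map (LinearMap.mulLeft K (β1 i j k))
            (YA.act (β2 i j k)) (YA.coact y)) := by rw [yfree]
      _ = ∑ k ∈ r i j, ∑ n ∈ sy,
            (XA.act (a i j) x * XA.act (β1 i j k * c n) x')
              ⊗ₜ[K] (YA.act (β2 i j k) (y0 n) * YA.act (d2 i) y') := by
          rw [map_sum]
          refine Finset.sum_congr rfl fun k _ => ?_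
          rw [hy, map_sum, hΛ, map_sum, LinearMap.sum_apply, map_sum]
          refine Finset.sum_congr rfl fun n _ => ?_
          rw [TensorProduct.map_tmul, Phi_tmul, LinearMap.rTensor_tmul]
          simp
  -- and now the sum swap
  have swap : ∑ i ∈ s, ∑ j ∈ p i, ∑ k ∈ r i j, ∑ n ∈ sy,
        (XA.act (a i j) x * XA.act (β1 i j k * c n) x')
          ⊗ₜ[K] (YA.act (β2 i j k) (y0 n) * YA.act (d2 i) y')
      = ∑ n ∈ sy, ∑ i ∈ s, ∑ j ∈ p i, ∑ k ∈ r i j,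
          (XA.act (a i j) x * XA.act (β1 i j k * c n) x')
            ⊗ₜ[K] (YA.act (β2 i j k) (y0 n) * YA.act (d2 i) y') := by
    rw [Finset.sum_congr rfl fun i (_ : i ∈ s) =>
      Finset.sum_congr rfl fun j (_ : j ∈ p i) => Finset.sum_comm]
    rw [Finset.sum_congr rfl fun i (_ : i ∈ s) => Finset.sum_comm]
    exact Finset.sum_comm
  rw [lhs1, rhsA, rhsB, dia, rhsD, Finset.sum_congr rfl fun i hi =>
    Finset.sum_congr rfl fun j hj => rhsE i hi j hj, swap]
  exact Finset.sum_congr rfl fun n _ => by rw [← lhs3 n, ← dia, lhs2 n]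

/-- `ν ((h ⊗ z) ⊗ w) = (h * w) ⊗ z` -/
noncomputable def nu : (D ⊗[K] Y) ⊗[K] D →ₗ[K] D ⊗[K] Y :=
  LinearMap.rTensor Y (LinearMap.mul' K D) ∘ₗ
    (TensorProduct.assoc K D D Y).symm.toLinearMap ∘ₗ
    LinearMap.lTensor D (TensorProduct.comm K Y D).toLinearMap ∘ₗ
    (TensorProduct.assoc K D Y D).toLinearMap

@[simp] theorem nu_tmul (h : D) (z : Y) (w : D) :
    nu (K := K) ((h ⊗ₜ[K] z) ⊗ₜ[K] w) = (h * w) ⊗ₜ[K] z := by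
  simp [nu, TensorProduct.assoc_symm_tmul]

theorem nu_eq (Q : D ⊗[K] Y) (w : D) :
    nu (K := K) (Q ⊗ₜ[K] w) = LinearMap.rTensor Y (LinearMap.mulRight K w) Q := by
  induction Q with
  | zero => simp
  | add a b ha hb => rw [TensorProduct.add_tmul, map_add, ha, hb, map_add]
  | tmul h z => simp

theorem M2_mulRight (P : D ⊗[K] X) (Q : D ⊗[K] Y) (w : D) :
    LinearMap.rTensor (X ⊗[K] Y) (LinearMap.mulRight K w) (M2 K D X Y (P ⊗ₜ[K] Q))
      = M2 K D X Y (P ⊗ₜ[K] nu (K := K) (Q ⊗ₜ[K] w)) := by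
  induction P with
  | zero => simp
  | add a b ha hb => simp only [TensorProduct.add_tmul, map_add, ha, hb]
  | tmul g xx =>
    induction Q with
    | zero => simp
    | add a b ha hb => simp only [TensorProduct.tmul_add, TensorProduct.add_tmul,
        map_add, ha, hb]
    | tmul h z => simp [mul_assoc]

theorem M2_right_pure (P : D ⊗[K] X) (w : D) (yy : Y) :
    M2 K D X Y (P ⊗ₜ[K] (w ⊗ₜ[K] yy))
      = LinearMap.lTensor D ((TensorProduct.mk K X Y).flip yy)
          (LinearMap.rTensor X (LinearMap.mulRight K w) P) := by
  induction P with
  | zero => simp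
  | add a b ha hb => simp only [TensorProduct.add_tmul, map_add, ha, hb]
  | tmul g xx => simp

theorem yd_prop (d : D) (s : Finset ℕ) (d1 d2 : ℕ → D)
    (hd : hD.comul d = ∑ i ∈ s, d1 i ⊗ₜ[K] d2 i) (d' : D) (u : X ⊗[K] Y) :
    ∑ i ∈ s, LinearMap.rTensor (X ⊗[K] Y) (LinearMap.mulRight K (d2 i * d'))
        (tcoact hD XA YA (tact hD XA YA (d1 i) u))
      = ∑ i ∈ s, TensorProduct.map
          ((LinearMap.mulLeft K (d1 i)) ∘ₗ (LinearMap.mulRight K d'))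
          (tact hD XA YA (d2 i)) (tcoact hD XA YA u) := by
  induction u with
  | zero => simp only [map_zero, Finset.sum_const_zero]
  | add a b ha hb => simp only [map_add, ha, hb, Finset.sum_add_distrib]
  | tmul x y =>
  obtain ⟨sx, xc, x0, hx⟩ := BPAux.exists_rep (XA.coact x)
  obtain ⟨sy, c, y0, hy⟩ := BPAux.exists_rep (YA.coact y)
  choose p a b ha using fun i => BPAux.exists_rep (hD.comul (d1 i))
  choose q e f he using fun i => BPAux.exists_rep (hD.comul (d2 i))
  have star := coassoc_exp hD d s d1 d2 hd p a b (fun i _ => ha i) q e f (fun i _ => he i)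
  -- transport maps
  set T : (D ⊗[K] (D ⊗[K] D)) →ₗ[K] D ⊗[K] (X ⊗[K] Y) :=
    M2 K D X Y ∘ₗ LinearMap.lTensor (D ⊗[K] X) (nu (K := K)) ∘ₗ
      TensorProduct.map (XA.coact ∘ₗ XA.act.flip x)
        (TensorProduct.map (YA.coact ∘ₗ YA.act.flip y) (LinearMap.mulRight K d'))
    with hTdef
  have hT : ∀ w1 w2 w3 : D, T (w1 ⊗ₜ[K] (w2 ⊗ₜ[K] w3))
      = M2 K D X Y (XA.coact (XA.act w1 x) ⊗ₜ[K]
          nu (K := K) (YA.coact (YA.act w2 y) ⊗ₜ[K] (w3 * d'))) := by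
    intro w1 w2 w3
    rw [hTdef]
    simp only [LinearMap.comp_apply, TensorProduct.map_tmul, LinearMap.lTensor_tmul,
      LinearMap.flip_apply, LinearMap.mulRight_apply]
  set T2 : ℕ → (D ⊗[K] (D ⊗[K] D)) →ₗ[K] D ⊗[K] (X ⊗[K] Y) := fun n =>
    M2 K D X Y ∘ₗ TensorProduct.map (XA.coact ∘ₗ XA.act.flip x)
      (TensorProduct.map (LinearMap.mulRight K (c n * d')) (YA.act.flip (y0 n)))
    with hT2def
  have hT2 : ∀ (n : ℕ) (w1 w2 w3 : D), T2 n (w1 ⊗ₜ[K] (w2 ⊗ₜ[K] w3))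
      = M2 K D X Y (XA.coact (XA.act w1 x) ⊗ₜ[K]
          ((w2 * (c n * d')) ⊗ₜ[K] YA.act w3 (y0 n))) := by
    intro n w1 w2 w3
    rw [hT2def]
    simp only [LinearMap.comp_apply, TensorProduct.map_tmul, LinearMap.flip_apply,
      LinearMap.mulRight_apply]
  set U : ℕ → ℕ → (D ⊗[K] (D ⊗[K] D)) →ₗ[K] D ⊗[K] (X ⊗[K] Y) := fun m n =>
    TensorProduct.map (LinearMap.mulRight K (xc m * (c n * d')))
      (TensorProduct.map (XA.act.flip (x0 m)) (YA.act.flip (y0 n))) with hUdef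
  have hU : ∀ (m n : ℕ) (w1 w2 w3 : D), U m n (w1 ⊗ₜ[K] (w2 ⊗ₜ[K] w3))
      = (w1 * (xc m * (c n * d'))) ⊗ₜ[K] (XA.act w2 (x0 m) ⊗ₜ[K] YA.act w3 (y0 n)) := by
    intro m n w1 w2 w3
    rw [hUdef]
    simp only [TensorProduct.map_tmul, LinearMap.flip_apply, LinearMap.mulRight_apply]
  -- step 1 : LHS = T (starL)
  have step1 : ∑ i ∈ s, LinearMap.rTensor (X ⊗[K] Y) (LinearMap.mulRight K (d2 i * d'))
        (tcoact hD XA YA (tact hD XA YA (d1 i) (x ⊗ₜ[K] y)))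
      = T (∑ i ∈ s, ∑ j ∈ p i, a i j ⊗ₜ[K] (b i j ⊗ₜ[K] d2 i)) := by
    rw [map_sum]
    refine Finset.sum_congr rfl fun i _ => ?_
    rw [tact_expand hD XA YA (d1 i) (p i) (a i) (b i) (ha i), map_sum, map_sum, map_sum]
    refine Finset.sum_congr rfl fun j _ => ?_
    rw [tcoact_tmul, M2_mulRight, hT]
  -- step 2 : T (starR) via yd for Y
  have step2 : T (∑ i ∈ s, ∑ k ∈ q i, d1 i ⊗ₜ[K] (e i k ⊗ₜ[K] f i k))
      = ∑ n ∈ sy, ∑ i ∈ s, ∑ k ∈ q i,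
          M2 K D X Y (XA.coact (XA.act (d1 i) x) ⊗ₜ[K]
            ((e i k * (c n * d')) ⊗ₜ[K] YA.act (f i k) (y0 n))) := by
    rw [map_sum]
    have inner : ∀ i ∈ s, T (∑ k ∈ q i, d1 i ⊗ₜ[K] (e i k ⊗ₜ[K] f i k))
        = ∑ n ∈ sy, ∑ k ∈ q i,
            M2 K D X Y (XA.coact (XA.act (d1 i) x) ⊗ₜ[K]
              ((e i k * (c n * d')) ⊗ₜ[K] YA.act (f i k) (y0 n))) := by
      intro i _
      have ydy := YA.yd (d2 i) (q i) (e i) (f i) (he i) d' y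
      set Ξ : (D ⊗[K] Y) →ₗ[K] D ⊗[K] (X ⊗[K] Y) :=
        M2 K D X Y ∘ₗ (TensorProduct.mk K (D ⊗[K] X) (D ⊗[K] Y))
          (XA.coact (XA.act (d1 i) x)) with hΞdef
      have hΞ : ∀ Q : D ⊗[K] Y, Ξ Q
          = M2 K D X Y (XA.coact (XA.act (d1 i) x) ⊗ₜ[K] Q) := fun Q => rfl
      calc T (∑ k ∈ q i, d1 i ⊗ₜ[K] (e i k ⊗ₜ[K] f i k))
          = ∑ k ∈ q i, Ξ (LinearMap.rTensor Y (LinearMap.mulRight K (f i k * d'))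
              (YA.coact (YA.act (e i k) y))) := by
            rw [map_sum]
            refine Finset.sum_congr rfl fun k _ => ?_
            rw [hT, nu_eq, hΞ]
        _ = Ξ (∑ k ∈ q i, LinearMap.rTensor Y (LinearMap.mulRight K (f i k * d'))
              (YA.coact (YA.act (e i k) y))) := (map_sum _ _ _).symm
        _ = Ξ (∑ k ∈ q i, TensorProduct.map
              ((LinearMap.mulLeft K (e i k)) ∘ₗ (LinearMap.mulRight K d'))
              (YA.act (f i k)) (YA.coact y)) := by rw [ydy]
        _ = ∑ n ∈ sy, ∑ k ∈ q i,
              M2 K D X Y (XA.coact (XA.act (d1 i) x) ⊗ₜ[K]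
                ((e i k * (c n * d')) ⊗ₜ[K] YA.act (f i k) (y0 n))) := by
            rw [map_sum]
            rw [Finset.sum_congr rfl fun k (_ : k ∈ q i) => ?_]
            · exact Finset.sum_comm
            · rw [hy, map_sum, hΞ, TensorProduct.tmul_sum, map_sum]
              refine Finset.sum_congr rfl fun n _ => ?_
              simp [mul_assoc]
    rw [Finset.sum_congr rfl inner]
    exact Finset.sum_comm
  -- step 3 : rewrite via T2 and yd for X
  have step3 : ∀ n ∈ sy, T2 n (∑ i ∈ s, ∑ k ∈ q i, d1 i ⊗ₜ[K] (e i k ⊗ₜ[K] f i k))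
      = ∑ i ∈ s, ∑ k ∈ q i,
          M2 K D X Y (XA.coact (XA.act (d1 i) x) ⊗ₜ[K]
            ((e i k * (c n * d')) ⊗ₜ[K] YA.act (f i k) (y0 n))) := by
    intro n _
    rw [map_sum]
    refine Finset.sum_congr rfl fun i _ => ?_
    rw [map_sum]
    exact Finset.sum_congr rfl fun k _ => hT2 n _ _ _
  have step4 : ∀ n ∈ sy, T2 n (∑ i ∈ s, ∑ j ∈ p i, a i j ⊗ₜ[K] (b i j ⊗ₜ[K] d2 i))
      = ∑ i ∈ s, ∑ m ∈ sx, ∑ j ∈ p i,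
          (a i j * (xc m * (c n * d')))
            ⊗ₜ[K] (XA.act (b i j) (x0 m) ⊗ₜ[K] YA.act (d2 i) (y0 n)) := by
    intro n _
    rw [map_sum]
    refine Finset.sum_congr rfl fun i _ => ?_
    have ydx := XA.yd (d1 i) (p i) (a i) (b i) (ha i) (c n * d') x
    set κ : (D ⊗[K] X) →ₗ[K] D ⊗[K] (X ⊗[K] Y) :=
      LinearMap.lTensor D ((TensorProduct.mk K X Y).flip (YA.act (d2 i) (y0 n)))
      with hκdef
    calc T2 n (∑ j ∈ p i, a i j ⊗ₜ[K] (b i j ⊗ₜ[K] d2 i))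
        = ∑ j ∈ p i, κ (LinearMap.rTensor X
            (LinearMap.mulRight K (b i j * (c n * d')))
            (XA.coact (XA.act (a i j) x))) := by
          rw [map_sum]
          refine Finset.sum_congr rfl fun j _ => ?_
          rw [hT2, M2_right_pure, hκdef]
      _ = κ (∑ j ∈ p i, TensorProduct.map
            ((LinearMap.mulLeft K (a i j)) ∘ₗ (LinearMap.mulRight K (c n * d')))
            (XA.act (b i j)) (XA.coact x)) := by rw [← map_sum, ydx]
      _ = ∑ m ∈ sx, ∑ j ∈ p i,
            (a i j * (xc m * (c n * d')))
              ⊗ₜ[K] (XA.act (b i j) (x0 m) ⊗ₜ[K] YA.act (d2 i) (y0 n)) := by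
          rw [map_sum]
          rw [Finset.sum_congr rfl fun j (_ : j ∈ p i) => ?_]
          · exact Finset.sum_comm
          · rw [hx, map_sum, map_sum]
            refine Finset.sum_congr rfl fun m _ => ?_
            rw [TensorProduct.map_tmul, hκdef, LinearMap.lTensor_tmul]
            simp [mul_assoc]
  -- step 5 : U transport
  have step5L : ∀ n ∈ sy, ∀ m ∈ sx,
      U m n (∑ i ∈ s, ∑ j ∈ p i, a i j ⊗ₜ[K] (b i j ⊗ₜ[K] d2 i))
        = ∑ i ∈ s, ∑ j ∈ p i,
            (a i j * (xc m * (c n * d')))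
              ⊗ₜ[K] (XA.act (b i j) (x0 m) ⊗ₜ[K] YA.act (d2 i) (y0 n)) := by
    intro n _ m _
    rw [map_sum]
    refine Finset.sum_congr rfl fun i _ => ?_
    rw [map_sum]
    exact Finset.sum_congr rfl fun j _ => hU m n _ _ _
  have step5R : ∀ n ∈ sy, ∀ m ∈ sx,
      U m n (∑ i ∈ s, ∑ k ∈ q i, d1 i ⊗ₜ[K] (e i k ⊗ₜ[K] f i k))
        = ∑ i ∈ s, ∑ k ∈ q i,
            (d1 i * (xc m * (c n * d')))
              ⊗ₜ[K] (XA.act (e i k) (x0 m) ⊗ₜ[K] YA.act (f i k) (y0 n)) := by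
    intro n _ m _
    rw [map_sum]
    refine Finset.sum_congr rfl fun i _ => ?_
    rw [map_sum]
    exact Finset.sum_congr rfl fun k _ => hU m n _ _ _
  -- RHS computation
  have rhs1 : ∑ i ∈ s, TensorProduct.map
        ((LinearMap.mulLeft K (d1 i)) ∘ₗ (LinearMap.mulRight K d'))
        (tact hD XA YA (d2 i)) (tcoact hD XA YA (x ⊗ₜ[K] y))
      = ∑ i ∈ s, ∑ m ∈ sx, ∑ n ∈ sy, ∑ k ∈ q i,
          (d1 i * (xc m * (c n * d')))
            ⊗ₜ[K] (XA.act (e i k) (x0 m) ⊗ₜ[K] YA.act (f i k) (y0 n)) := by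
    refine Finset.sum_congr rfl fun i _ => ?_
    rw [tcoact_expand hD XA YA x y sx sy xc x0 c y0 hx hy, map_sum]
    refine Finset.sum_congr rfl fun m _ => ?_
    rw [map_sum]
    refine Finset.sum_congr rfl fun n _ => ?_
    rw [TensorProduct.map_tmul, tact_expand hD XA YA (d2 i) (q i) (e i) (f i) (he i),
      TensorProduct.tmul_sum]
    refine Finset.sum_congr rfl fun k _ => ?_
    simp [mul_assoc]
  -- assemble
  rw [step1, star, step2, rhs1]
  rw [Finset.sum_congr rfl fun n (hn : n ∈ sy) => (step3 n hn).symm,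
    Finset.sum_congr rfl fun n (hn : n ∈ sy) => (congrArg (T2 n) star.symm),
    Finset.sum_congr rfl fun n (hn : n ∈ sy) => step4 n hn]
  -- both sides are now explicit quadruple sums; reorder
  have reorder : ∑ n ∈ sy, ∑ i ∈ s, ∑ m ∈ sx, ∑ j ∈ p i,
        (a i j * (xc m * (c n * d')))
          ⊗ₜ[K] (XA.act (b i j) (x0 m) ⊗ₜ[K] YA.act (d2 i) (y0 n))
      = ∑ n ∈ sy, ∑ m ∈ sx, ∑ i ∈ s, ∑ j ∈ p i,
          (a i j * (xc m * (c n * d')))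
            ⊗ₜ[K] (XA.act (b i j) (x0 m) ⊗ₜ[K] YA.act (d2 i) (y0 n)) :=
    Finset.sum_congr rfl fun n _ => Finset.sum_comm
  rw [reorder,
    Finset.sum_congr rfl fun n (hn : n ∈ sy) =>
      Finset.sum_congr rfl fun m (hm : m ∈ sx) => (step5L n hn m hm).symm,
    Finset.sum_congr rfl fun n (hn : n ∈ sy) =>
      Finset.sum_congr rfl fun m (hm : m ∈ sx) => congrArg (U m n) star,
    Finset.sum_congr rfl fun n (hn : n ∈ sy) =>
      Finset.sum_congr rfl fun m (hm : m ∈ sx) => step5R n hn m hm]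
  -- now RHS-target : Σ_i Σ_m Σ_n Σ_k ; current : Σ_n Σ_m Σ_i Σ_k
  rw [Finset.sum_comm (s := sy) (t := sx)]
  rw [Finset.sum_congr rfl fun m (_ : m ∈ sx) => Finset.sum_comm (s := sy) (t := s)]
  rw [Finset.sum_comm (s := sx) (t := s)]

theorem tmul_mul_map (aD : D) (bX : X) (P : D ⊗[K] X) :
    (aD ⊗ₜ[K] bX) * P
      = TensorProduct.map (LinearMap.mulLeft K aD) (LinearMap.mulLeft K bX) P := by
  induction P with
  | zero => simp [mul_zero]
  | add a b ha hb => rw [mul_add, ha, hb, map_add]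
  | tmul g xx => rw [Algebra.TensorProduct.tmul_mul_tmul, TensorProduct.map_tmul]; rfl

theorem mulRight_map_comm (w aD : D) (bX : X) (Q : D ⊗[K] X) :
    LinearMap.rTensor X (LinearMap.mulRight K w)
        (TensorProduct.map (LinearMap.mulLeft K aD) (LinearMap.mulLeft K bX) Q)
      = TensorProduct.map (LinearMap.mulLeft K aD) (LinearMap.mulLeft K bX)
          (LinearMap.rTensor X (LinearMap.mulRight K w) Q) := by
  induction Q with
  | zero => simp
  | add a b ha hb => simp only [map_add, ha, hb]
  | tmul g xx => simp [mul_assoc]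

/-- the product on `D ⊗ (X ⊗ Y)` induced by the braided product -/
noncomputable def muT : (D ⊗[K] (X ⊗[K] Y)) ⊗[K] (D ⊗[K] (X ⊗[K] Y))
    →ₗ[K] D ⊗[K] (X ⊗[K] Y) :=
  LinearMap.lTensor D (TensorProduct.lift (bmul hD XA YA)) ∘ₗ
    M2 K D (X ⊗[K] Y) (X ⊗[K] Y)

theorem muT_tmul (g g' : D) (w w' : X ⊗[K] Y) :
    muT hD XA YA ((g ⊗ₜ[K] w) ⊗ₜ[K] (g' ⊗ₜ[K] w'))
      = (g * g') ⊗ₜ[K] bmul hD XA YA w w' := by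
  simp [muT, TensorProduct.lift.tmul]

theorem tcoact_bmul (u v : X ⊗[K] Y) :
    tcoact hD XA YA (bmul hD XA YA u v)
      = muT hD XA YA (tcoact hD XA YA u ⊗ₜ[K] tcoact hD XA YA v) := by
  induction u with
  | zero => simp only [map_zero, LinearMap.zero_apply, TensorProduct.zero_tmul, map_zero]
  | add a b ha hb => simp only [map_add, LinearMap.add_apply, ha, hb,
      TensorProduct.add_tmul]
  | tmul x y =>
  induction v with
  | zero => simp only [map_zero, TensorProduct.tmul_zero]
  | add a b ha hb => simp only [map_add, ha, hb, TensorProduct.tmul_add]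
  | tmul x' y' =>
  obtain ⟨sx, xc, x0, hx⟩ := BPAux.exists_rep (XA.coact x)
  obtain ⟨sy, c, y0, hy⟩ := BPAux.exists_rep (YA.coact y)
  obtain ⟨sp, pc, p0, hx'⟩ := BPAux.exists_rep (XA.coact x')
  obtain ⟨sq, qc, q0, hy'⟩ := BPAux.exists_rep (YA.coact y')
  choose pn c1 c2 hcc using fun n => BPAux.exists_rep (hD.comul (c n))
  choose qn h z hz using fun n => BPAux.exists_rep (YA.coact (y0 n))
  have cY := comodule_coassoc_exp hD YA y sy c y0 hy pn c1 c2 (fun n _ => hcc n)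
    qn h z (fun n _ => hz n)
  set W : ℕ → ℕ → (D ⊗[K] (D ⊗[K] Y)) →ₗ[K] D ⊗[K] (X ⊗[K] Y) := fun m qq =>
    M2 K D X Y ∘ₗ TensorProduct.map
      (TensorProduct.map (LinearMap.mulLeft K (xc m)) (LinearMap.mulLeft K (x0 m)) ∘ₗ
        (XA.coact ∘ₗ XA.act.flip x'))
      (TensorProduct.map (LinearMap.mulRight K (qc qq)) (LinearMap.mulRight K (q0 qq)))
    with hWdef
  have hW : ∀ (m qq : ℕ) (w1 w2 : D) (w3 : Y),
      W m qq (w1 ⊗ₜ[K] (w2 ⊗ₜ[K] w3))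
        = M2 K D X Y ((TensorProduct.map (LinearMap.mulLeft K (xc m))
            (LinearMap.mulLeft K (x0 m)) (XA.coact (XA.act w1 x')))
              ⊗ₜ[K] ((w2 * qc qq) ⊗ₜ[K] (w3 * q0 qq))) := by
    intro m qq w1 w2 w3
    rw [hWdef]
    simp only [LinearMap.comp_apply, TensorProduct.map_tmul, LinearMap.flip_apply,
      LinearMap.mulRight_apply]
  set V : ℕ → ℕ → ℕ → (D ⊗[K] (D ⊗[K] Y)) →ₗ[K] D ⊗[K] (X ⊗[K] Y) := fun m pp qq =>
    TensorProduct.map (LinearMap.mulRight K (pc pp * qc qq) ∘ₗ LinearMap.mulLeft K (xc m))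
      (TensorProduct.map (LinearMap.mulLeft K (x0 m) ∘ₗ XA.act.flip (p0 pp))
        (LinearMap.mulRight K (q0 qq))) with hVdef
  have hV : ∀ (m pp qq : ℕ) (w1 w2 : D) (w3 : Y),
      V m pp qq (w1 ⊗ₜ[K] (w2 ⊗ₜ[K] w3))
        = ((xc m * w1) * (pc pp * qc qq))
            ⊗ₜ[K] ((x0 m * XA.act w2 (p0 pp)) ⊗ₜ[K] (w3 * q0 qq)) := by
    intro m pp qq w1 w2 w3
    rw [hVdef]
    simp only [TensorProduct.map_tmul, LinearMap.comp_apply, LinearMap.flip_apply,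
      LinearMap.mulLeft_apply, LinearMap.mulRight_apply]
  -- LHS
  have lhs1 : tcoact hD XA YA (bmul hD XA YA (x ⊗ₜ[K] y) (x' ⊗ₜ[K] y'))
      = ∑ n ∈ sy, ∑ m ∈ sx, ∑ t ∈ qn n, ∑ qq ∈ sq,
          W m qq (c n ⊗ₜ[K] (h n t ⊗ₜ[K] z n t)) := by
    rw [bmul_expand hD XA YA x x' y y' sy c y0 hy, map_sum]
    refine Finset.sum_congr rfl fun n _ => ?_
    rw [tcoact_tmul, XA.coact_mul, YA.coact_mul, hz n, hy', sum_mul_sum_tmul, hx,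
      Finset.sum_mul]
    rw [Finset.sum_congr rfl fun m (_ : m ∈ sx) => tmul_mul_map (xc m) (x0 m) _,
      TensorProduct.sum_tmul, map_sum]
    refine Finset.sum_congr rfl fun m _ => ?_
    rw [TensorProduct.tmul_sum, map_sum]
    refine Finset.sum_congr rfl fun t _ => ?_
    rw [TensorProduct.tmul_sum, map_sum]
    exact Finset.sum_congr rfl fun qq _ => (hW m qq _ _ _).symm
  have lhs2 : ∀ m ∈ sx, ∀ qq ∈ sq,
      W m qq (∑ n ∈ sy, ∑ j ∈ pn n, c1 n j ⊗ₜ[K] (c2 n j ⊗ₜ[K] y0 n))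
        = ∑ n ∈ sy, ∑ j ∈ pn n, ∑ pp ∈ sp,
            (xc m * (c1 n j * (pc pp * qc qq)))
              ⊗ₜ[K] ((x0 m * XA.act (c2 n j) (p0 pp)) ⊗ₜ[K] (y0 n * q0 qq)) := by
    intro m _ qq _
    rw [map_sum]
    refine Finset.sum_congr rfl fun n _ => ?_
    have ydx := XA.yd (c n) (pn n) (c1 n) (c2 n) (hcc n) (qc qq) x'
    set Λ : (D ⊗[K] X) →ₗ[K] D ⊗[K] (X ⊗[K] Y) :=
      LinearMap.lTensor D ((TensorProduct.mk K X Y).flip (y0 n * q0 qq)) ∘ₗ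
        TensorProduct.map (LinearMap.mulLeft K (xc m)) (LinearMap.mulLeft K (x0 m))
      with hΛdef
    calc W m qq (∑ j ∈ pn n, c1 n j ⊗ₜ[K] (c2 n j ⊗ₜ[K] y0 n))
        = ∑ j ∈ pn n, Λ (LinearMap.rTensor X (LinearMap.mulRight K (c2 n j * qc qq))
            (XA.coact (XA.act (c1 n j) x'))) := by
          rw [map_sum]
          refine Finset.sum_congr rfl fun j _ => ?_
          rw [hW, M2_right_pure, mulRight_map_comm, hΛdef]
          rfl
      _ = Λ (∑ j ∈ pn n, TensorProduct.map
            ((LinearMap.mulLeft K (c1 n j)) ∘ₗ (LinearMap.mulRight K (qc qq)))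
            (XA.act (c2 n j)) (XA.coact x')) := by rw [← map_sum, ydx]
      _ = ∑ j ∈ pn n, ∑ pp ∈ sp,
            (xc m * (c1 n j * (pc pp * qc qq)))
              ⊗ₜ[K] ((x0 m * XA.act (c2 n j) (p0 pp)) ⊗ₜ[K] (y0 n * q0 qq)) := by
          rw [map_sum]
          refine Finset.sum_congr rfl fun j _ => ?_
          rw [hx', map_sum, map_sum, hΛdef]
          refine Finset.sum_congr rfl fun pp _ => ?_
          simp [mul_assoc]
  -- RHS
  have rhs1 : muT hD XA YA (tcoact hD XA YA (x ⊗ₜ[K] y) ⊗ₜ[K] tcoact hD XA YA (x' ⊗ₜ[K] y'))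
      = ∑ m ∈ sx, ∑ n ∈ sy, ∑ pp ∈ sp, ∑ qq ∈ sq, ∑ t ∈ qn n,
          ((xc m * c n) * (pc pp * qc qq))
            ⊗ₜ[K] ((x0 m * XA.act (h n t) (p0 pp)) ⊗ₜ[K] (z n t * q0 qq)) := by
    rw [tcoact_expand hD XA YA x y sx sy xc x0 c y0 hx hy,
      tcoact_expand hD XA YA x' y' sp sq pc p0 qc q0 hx' hy',
      TensorProduct.sum_tmul, map_sum]
    refine Finset.sum_congr rfl fun m _ => ?_
    rw [TensorProduct.sum_tmul, map_sum]
    refine Finset.sum_congr rfl fun n _ => ?_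
    rw [TensorProduct.tmul_sum, map_sum]
    refine Finset.sum_congr rfl fun pp _ => ?_
    rw [TensorProduct.tmul_sum, map_sum]
    refine Finset.sum_congr rfl fun qq _ => ?_
    rw [muT_tmul, bmul_expand hD XA YA (x0 m) (p0 pp) (y0 n) (q0 qq) (qn n) (h n) (z n)
      (hz n), TensorProduct.tmul_sum]
  have rhs2 : ∀ m ∈ sx, ∀ pp ∈ sp, ∀ qq ∈ sq,
      V m pp qq (∑ n ∈ sy, ∑ t ∈ qn n, c n ⊗ₜ[K] (h n t ⊗ₜ[K] z n t))
        = ∑ n ∈ sy, ∑ t ∈ qn n,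
            ((xc m * c n) * (pc pp * qc qq))
              ⊗ₜ[K] ((x0 m * XA.act (h n t) (p0 pp)) ⊗ₜ[K] (z n t * q0 qq)) := by
    intro m _ pp _ qq _
    rw [map_sum]
    refine Finset.sum_congr rfl fun n _ => ?_
    rw [map_sum]
    exact Finset.sum_congr rfl fun t _ => hV m pp qq _ _ _
  have rhs3 : ∀ m ∈ sx, ∀ pp ∈ sp, ∀ qq ∈ sq,
      V m pp qq (∑ n ∈ sy, ∑ j ∈ pn n, c1 n j ⊗ₜ[K] (c2 n j ⊗ₜ[K] y0 n))
        = ∑ n ∈ sy, ∑ j ∈ pn n,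
            ((xc m * c1 n j) * (pc pp * qc qq))
              ⊗ₜ[K] ((x0 m * XA.act (c2 n j) (p0 pp)) ⊗ₜ[K] (y0 n * q0 qq)) := by
    intro m _ pp _ qq _
    rw [map_sum]
    refine Finset.sum_congr rfl fun n _ => ?_
    rw [map_sum]
    exact Finset.sum_congr rfl fun j _ => hV m pp qq _ _ _
  -- assemble LHS
  rw [lhs1, rhs1]
  -- LHS reorder : n, m, t, qq  →  m, qq, (n,t)
  rw [Finset.sum_congr rfl fun n (_ : n ∈ sy) =>
    Finset.sum_congr rfl fun m (_ : m ∈ sx) => Finset.sum_comm (s := qn n) (t := sq)]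
  rw [Finset.sum_congr rfl fun n (_ : n ∈ sy) => Finset.sum_comm (s := sx) (t := sq)]
  rw [Finset.sum_comm (s := sy) (t := sq)]
  rw [Finset.sum_congr rfl fun qq (_ : qq ∈ sq) => Finset.sum_comm (s := sy) (t := sx)]
  -- now LHS = Σ_qq Σ_m Σ_n Σ_t W m qq (c n ⊗ (h ⊗ z))
  have lhsW : ∀ qq ∈ sq, ∀ m ∈ sx,
      ∑ n ∈ sy, ∑ t ∈ qn n, W m qq (c n ⊗ₜ[K] (h n t ⊗ₜ[K] z n t))
        = ∑ n ∈ sy, ∑ j ∈ pn n, ∑ pp ∈ sp,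
            (xc m * (c1 n j * (pc pp * qc qq)))
              ⊗ₜ[K] ((x0 m * XA.act (c2 n j) (p0 pp)) ⊗ₜ[K] (y0 n * q0 qq)) := by
    intro qq hqq m hm
    calc ∑ n ∈ sy, ∑ t ∈ qn n, W m qq (c n ⊗ₜ[K] (h n t ⊗ₜ[K] z n t))
        = W m qq (∑ n ∈ sy, ∑ t ∈ qn n, c n ⊗ₜ[K] (h n t ⊗ₜ[K] z n t)) := by
          rw [map_sum]
          exact Finset.sum_congr rfl fun n _ => (map_sum _ _ _).symm
      _ = W m qq (∑ n ∈ sy, ∑ j ∈ pn n, c1 n j ⊗ₜ[K] (c2 n j ⊗ₜ[K] y0 n)) := by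
          rw [cY]
      _ = _ := lhs2 m hm qq hqq
  rw [Finset.sum_congr rfl fun qq hqq => Finset.sum_congr rfl fun m hm =>
    lhsW qq hqq m hm]
  -- assemble RHS : reorder m, n, pp, qq, t → m, pp, qq, (n,t)
  rw [Finset.sum_congr rfl fun m (_ : m ∈ sx) => Finset.sum_comm (s := sy) (t := sp)]
  rw [Finset.sum_congr rfl fun m (_ : m ∈ sx) =>
    Finset.sum_congr rfl fun pp (_ : pp ∈ sp) => Finset.sum_comm (s := sy) (t := sq)]
  have rhsW : ∀ m ∈ sx, ∀ pp ∈ sp, ∀ qq ∈ sq,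
      ∑ n ∈ sy, ∑ t ∈ qn n,
          ((xc m * c n) * (pc pp * qc qq))
            ⊗ₜ[K] ((x0 m * XA.act (h n t) (p0 pp)) ⊗ₜ[K] (z n t * q0 qq))
        = ∑ n ∈ sy, ∑ j ∈ pn n,
            ((xc m * c1 n j) * (pc pp * qc qq))
              ⊗ₜ[K] ((x0 m * XA.act (c2 n j) (p0 pp)) ⊗ₜ[K] (y0 n * q0 qq)) := by
    intro m hm pp hpp qq hqq
    calc ∑ n ∈ sy, ∑ t ∈ qn n,
          ((xc m * c n) * (pc pp * qc qq))
            ⊗ₜ[K] ((x0 m * XA.act (h n t) (p0 pp)) ⊗ₜ[K] (z n t * q0 qq))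
        = V m pp qq (∑ n ∈ sy, ∑ t ∈ qn n, c n ⊗ₜ[K] (h n t ⊗ₜ[K] z n t)) :=
          (rhs2 m hm pp hpp qq hqq).symm
      _ = V m pp qq (∑ n ∈ sy, ∑ j ∈ pn n, c1 n j ⊗ₜ[K] (c2 n j ⊗ₜ[K] y0 n)) := by
          rw [cY]
      _ = _ := rhs3 m hm pp hpp qq hqq
  rw [Finset.sum_congr rfl fun m hm => Finset.sum_congr rfl fun pp hpp =>
    Finset.sum_congr rfl fun qq hqq => rhsW m hm pp hpp qq hqq]
  -- final : reorder LHS  Σ_qq Σ_m Σ_n Σ_j Σ_pp  →  Σ_m Σ_pp Σ_qq Σ_n Σ_j  and mul_assoc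
  calc ∑ qq ∈ sq, ∑ m ∈ sx, ∑ n ∈ sy, ∑ j ∈ pn n, ∑ pp ∈ sp,
        (xc m * (c1 n j * (pc pp * qc qq)))
          ⊗ₜ[K] ((x0 m * XA.act (c2 n j) (p0 pp)) ⊗ₜ[K] (y0 n * q0 qq))
      = ∑ qq ∈ sq, ∑ m ∈ sx, ∑ n ∈ sy, ∑ pp ∈ sp, ∑ j ∈ pn n,
          (xc m * (c1 n j * (pc pp * qc qq)))
            ⊗ₜ[K] ((x0 m * XA.act (c2 n j) (p0 pp)) ⊗ₜ[K] (y0 n * q0 qq)) :=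
        Finset.sum_congr rfl fun qq _ => Finset.sum_congr rfl fun m _ =>
          Finset.sum_congr rfl fun n _ => Finset.sum_comm
    _ = ∑ qq ∈ sq, ∑ m ∈ sx, ∑ pp ∈ sp, ∑ n ∈ sy, ∑ j ∈ pn n,
          (xc m * (c1 n j * (pc pp * qc qq)))
            ⊗ₜ[K] ((x0 m * XA.act (c2 n j) (p0 pp)) ⊗ₜ[K] (y0 n * q0 qq)) :=
        Finset.sum_congr rfl fun qq _ => Finset.sum_congr rfl fun m _ =>
          Finset.sum_comm
    _ = ∑ m ∈ sx, ∑ qq ∈ sq, ∑ pp ∈ sp, ∑ n ∈ sy, ∑ j ∈ pn n,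
          (xc m * (c1 n j * (pc pp * qc qq)))
            ⊗ₜ[K] ((x0 m * XA.act (c2 n j) (p0 pp)) ⊗ₜ[K] (y0 n * q0 qq)) :=
        Finset.sum_comm
    _ = ∑ m ∈ sx, ∑ pp ∈ sp, ∑ qq ∈ sq, ∑ n ∈ sy, ∑ j ∈ pn n,
          (xc m * (c1 n j * (pc pp * qc qq)))
            ⊗ₜ[K] ((x0 m * XA.act (c2 n j) (p0 pp)) ⊗ₜ[K] (y0 n * q0 qq)) :=
        Finset.sum_congr rfl fun m _ => Finset.sum_comm
    _ = ∑ m ∈ sx, ∑ pp ∈ sp, ∑ qq ∈ sq, ∑ n ∈ sy, ∑ j ∈ pn n,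
          ((xc m * c1 n j) * (pc pp * qc qq))
            ⊗ₜ[K] ((x0 m * XA.act (c2 n j) (p0 pp)) ⊗ₜ[K] (y0 n * q0 qq)) :=
        Finset.sum_congr rfl fun m _ => Finset.sum_congr rfl fun pp _ =>
          Finset.sum_congr rfl fun qq _ => Finset.sum_congr rfl fun n _ =>
            Finset.sum_congr rfl fun j _ => by rw [mul_assoc]

end BP
/-- Let `D` be a regular multiplier Hopf algebra and let `X` and `Y` be
two (left-left) Yetter-Drinfel'd `D`-module algebras.  Then their braided product
`X ∝ Y`, namely the vector space `X ⊗ Y` with product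
`(x ∝ y)(x' ∝ y') = x(y₍₋₁₎ · x') ∝ y₍₀₎ y'`,
is again a (left-left) Yetter-Drinfel'd `D`-module algebra with the tensor product
action `d · (x ⊗ y) = d₍₁₎ · x ⊗ d₍₂₎ · y` and coaction `x ⊗ y ↦ x₍₋₁₎ y₍₋₁₎ ⊗ (x₍₀₎ ⊗ y₍₀₎)`. -/
theorem braided_product_yetter_drinfeld_module_algebra
    {K : Type} [Field K]
    {D : Type} [NonUnitalRing D] [Module K D] [SMulCommClass K D D] [IsScalarTower K D D]
    {X : Type} [NonUnitalRing X] [Module K X] [SMulCommClass K X X] [IsScalarTower K X X]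
    {Y : Type} [NonUnitalRing Y] [Module K Y] [SMulCommClass K Y Y] [IsScalarTower K Y Y]
    (hD : RegularMultiplierHopf K D)
    (XA : YetterDrinfeldModuleAlgebra K D X hD)
    (YA : YetterDrinfeldModuleAlgebra K D Y hD) :
    ∃ (bmul : (X ⊗[K] Y) →ₗ[K] (X ⊗[K] Y) →ₗ[K] (X ⊗[K] Y))
      (tact : D →ₗ[K] (X ⊗[K] Y) →ₗ[K] (X ⊗[K] Y))
      (tcoact : (X ⊗[K] Y) →ₗ[K] D ⊗[K] (X ⊗[K] Y)),
      -- the braided product `(x ∝ y)(x' ∝ y') = x(y₍₋₁₎ · x') ∝ y₍₀₎ y'`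
      (∀ (x x' : X) (y y' : Y) (s : Finset ℕ) (yc : ℕ → D) (y0 : ℕ → Y),
        YA.coact y = ∑ k ∈ s, yc k ⊗ₜ[K] y0 k →
        bmul (x ⊗ₜ[K] y) (x' ⊗ₜ[K] y')
          = ∑ k ∈ s, (x * XA.act (yc k) x') ⊗ₜ[K] (y0 k * y')) ∧
      -- the tensor product action `d · (x ⊗ y) = (d₍₁₎ · x) ⊗ (d₍₂₎ · y)`
      (∀ (d : D) (s : Finset ℕ) (d1 d2 : ℕ → D),
        hD.comul d = ∑ i ∈ s, d1 i ⊗ₜ[K] d2 i →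
        ∀ (x : X) (y : Y),
          tact d (x ⊗ₜ[K] y) = ∑ i ∈ s, (XA.act (d1 i) x) ⊗ₜ[K] (YA.act (d2 i) y)) ∧
      -- the tensor product coaction `x ⊗ y ↦ x₍₋₁₎ y₍₋₁₎ ⊗ (x₍₀₎ ⊗ y₍₀₎)`
      (∀ (x : X) (y : Y) (s t : Finset ℕ)
          (xc : ℕ → D) (x0 : ℕ → X) (yc : ℕ → D) (y0 : ℕ → Y),
        XA.coact x = ∑ i ∈ s, xc i ⊗ₜ[K] x0 i →
        YA.coact y = ∑ j ∈ t, yc j ⊗ₜ[K] y0 j →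
        tcoact (x ⊗ₜ[K] y)
          = ∑ i ∈ s, ∑ j ∈ t, (xc i * yc j) ⊗ₜ[K] (x0 i ⊗ₜ[K] y0 j)) ∧
      -- the braided product is associative
      (∀ u v w : X ⊗[K] Y, bmul (bmul u v) w = bmul u (bmul v w)) ∧
      -- `X ∝ Y` is a unital `D`-module
      (∀ (d d' : D) (u : X ⊗[K] Y), tact (d * d') u = tact d (tact d' u)) ∧
      Submodule.span K {v : X ⊗[K] Y | ∃ (d : D) (u : X ⊗[K] Y), tact d u = v} = ⊤ ∧
      -- `X ∝ Y` is a `D`-module algebra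
      (∀ (d : D) (s : Finset ℕ) (d1 d2 : ℕ → D),
        hD.comul d = ∑ i ∈ s, d1 i ⊗ₜ[K] d2 i →
        ∀ u v : X ⊗[K] Y,
          tact d (bmul u v) = ∑ i ∈ s, bmul (tact (d1 i) u) (tact (d2 i) v)) ∧
      -- `X ∝ Y` is a `D`-comodule
      (∀ u : X ⊗[K] Y,
        (TensorProduct.assoc K D D (X ⊗[K] Y))
            ((LinearMap.rTensor (X ⊗[K] Y) hD.comul) (tcoact u))
          = (LinearMap.lTensor D tcoact) (tcoact u)) ∧
      (∀ u : X ⊗[K] Y,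
        (TensorProduct.lid K (X ⊗[K] Y))
          ((LinearMap.rTensor (X ⊗[K] Y) hD.counit) (tcoact u)) = u) ∧
      -- `X ∝ Y` is a `D`-comodule algebra
      (∀ (u v : X ⊗[K] Y) (s t : Finset ℕ)
          (g g' : ℕ → D) (w w' : ℕ → X ⊗[K] Y),
        tcoact u = ∑ k ∈ s, g k ⊗ₜ[K] w k →
        tcoact v = ∑ l ∈ t, g' l ⊗ₜ[K] w' l →
        tcoact (bmul u v)
          = ∑ k ∈ s, ∑ l ∈ t, (g k * g' l) ⊗ₜ[K] (bmul (w k) (w' l))) ∧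
      -- the Yetter-Drinfel'd compatibility condition
      (∀ (d : D) (s : Finset ℕ) (d1 d2 : ℕ → D),
        hD.comul d = ∑ i ∈ s, d1 i ⊗ₜ[K] d2 i →
        ∀ (d' : D) (u : X ⊗[K] Y),
          ∑ i ∈ s, (LinearMap.rTensor (X ⊗[K] Y) (LinearMap.mulRight K (d2 i * d')))
              (tcoact (tact (d1 i) u))
            = ∑ i ∈ s, (TensorProduct.map
                ((LinearMap.mulLeft K (d1 i)) ∘ₗ (LinearMap.mulRight K d'))
                (tact (d2 i))) (tcoact u)) := by

  classical
  refine ⟨BP.bmul hD XA YA, BP.tact hD XA YA, BP.tcoact hD XA YA,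
    ?_, ?_, ?_, ?_, ?_, ?_, ?_, ?_, ?_, ?_, ?_⟩
  · intro x x' y y' s yc y0 h
    exact BP.bmul_expand hD XA YA x x' y y' s yc y0 h
  · intro d s d1 d2 hd x y
    exact BP.tact_expand hD XA YA d s d1 d2 hd x y
  · intro x y s t xc x0 yc y0 hx hy
    exact BP.tcoact_expand hD XA YA x y s t xc x0 yc y0 hx hy
  · exact BP.bmul_assoc hD XA YA
  · exact BP.tact_mul hD XA YA
  · exact BP.tact_unital hD XA YA
  · exact BP.tact_bmul hD XA YA
  · exact BP.tcoact_coassoc hD XA YA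
  · exact BP.tcoact_counit hD XA YA
  · intro u v s t g g' w w' hu hv
    rw [BP.tcoact_bmul hD XA YA u v, hu, hv, TensorProduct.sum_tmul, map_sum]
    refine Finset.sum_congr rfl fun k _ => ?_
    rw [TensorProduct.tmul_sum, map_sum]
    exact Finset.sum_congr rfl fun l _ => BP.muT_tmul hD XA YA _ _ _ _
  · exact BP.yd_prop hD XA YA
end
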